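/- arXiv:2307.07209 — 3 statements merged into one kernel-verified Lean document; each statement's English description precedes it below -/
import Mathlib

section
/- For every si-logic L, the fmp span of L is exactly the interval [L⁻, L⁺] in the lattice of si-logics: fmp(L) = { L' an si-logic : L⁻ ⊆ L' ⊆ L⁺ }. -/
/-- Intuitionistic propositional formulas over variables `p₀, p₁, …`. -/
inductive IForm : Type
  | var : ℕ → IForm
  | bot : IForm
  | and : IForm → IForm → IForm
  | or : IForm → IForm → IForm
  | imp : IForm → IForm → IForm

namespace IForm

/-- Uniform substitution. -/
def subst (σ : ℕ → IForm) : IForm → IForm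
  | var n => σ n
  | bot => bot
  | and φ ψ => and (subst σ φ) (subst σ ψ)
  | or φ ψ => or (subst σ φ) (subst σ ψ)
  | imp φ ψ => imp (subst σ φ) (subst σ ψ)

/-- Biconditional `φ ↔ ψ`. -/
def biimp (φ ψ : IForm) : IForm := and (imp φ ψ) (imp ψ φ)

end IForm

/-- The theorems of the intuitionistic propositional calculus `IPC`, given by a
standard Hilbert-style axiomatization (all axioms are schemes, so `IPC` is
closed under uniform substitution) together with modus ponens. -/
inductive IPC : IForm → Prop
  | ax1 (φ ψ : IForm) : IPC (φ.imp (ψ.imp φ))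
  | ax2 (φ ψ χ : IForm) : IPC ((φ.imp (ψ.imp χ)).imp ((φ.imp ψ).imp (φ.imp χ)))
  | andE1 (φ ψ : IForm) : IPC ((φ.and ψ).imp φ)
  | andE2 (φ ψ : IForm) : IPC ((φ.and ψ).imp ψ)
  | andI (φ ψ : IForm) : IPC (φ.imp (ψ.imp (φ.and ψ)))
  | orI1 (φ ψ : IForm) : IPC (φ.imp (φ.or ψ))
  | orI2 (φ ψ : IForm) : IPC (ψ.imp (φ.or ψ))
  | orE (φ ψ χ : IForm) : IPC ((φ.imp χ).imp ((ψ.imp χ).imp ((φ.or ψ).imp χ)))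
  | exfalso (φ : IForm) : IPC (IForm.bot.imp φ)
  | mp (φ ψ : IForm) : IPC (φ.imp ψ) → IPC φ → IPC ψ

/-- A superintuitionistic logic: a set of formulas containing `IPC` and closed
under modus ponens and uniform substitution. -/
def SuperIntuitionistic (L : Set IForm) : Prop :=
  (∀ φ, IPC φ → φ ∈ L) ∧
  (∀ φ ψ, φ.imp ψ ∈ L → φ ∈ L → ψ ∈ L) ∧
  (∀ φ (σ : ℕ → IForm), φ ∈ L → φ.subst σ ∈ L)
/-- Kripke forcing on a poset, relative to a valuation by upsets. -/
def Forces {X : Type} [Preorder X] (v : ℕ → Set X) : X → IForm → Prop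
  | x, .var n => x ∈ v n
  | _, .bot => False
  | x, .and φ ψ => Forces v x φ ∧ Forces v x ψ
  | x, .or φ ψ => Forces v x φ ∨ Forces v x ψ
  | x, .imp φ ψ => ∀ y, x ≤ y → Forces v y φ → Forces v y ψ

/-- A formula is valid in a poset if it is forced at every point under every
valuation by upsets. -/
def ValidIn (X : Type) [Preorder X] (φ : IForm) : Prop :=
  ∀ v : ℕ → Set X, (∀ n, IsUpperSet (v n)) → ∀ x : X, Forces v x φ

/-- A poset validates a logic if every formula of the logic is valid in it. -/
def ValidLogic (X : Type) [Preorder X] (L : Set IForm) : Prop :=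
  ∀ φ ∈ L, ValidIn X φ

/-- `Fin(L) = Fin(L')`: the two logics are validated by the same finite posets. -/
def SameFinPosets (L L' : Set IForm) : Prop :=
  ∀ (X : Type) [Fintype X] [PartialOrder X], ValidLogic X L ↔ ValidLogic X L'

/-- The fmp span of a logic: the si-logics validated by the same finite posets. -/
def fmpSpan (L : Set IForm) : Set (Set IForm) :=
  {L' | SuperIntuitionistic L' ∧ SameFinPosets L L'}

/-- The degree of the finite model property of a logic. -/
def degFmp (L : Set IForm) : Cardinal :=
  Cardinal.mk (fmpSpan L)
/-- `IPC + Ax`: the least si-logic containing `Ax`. -/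
def IPCPlus (Ax : Set IForm) : Set IForm :=
  {φ | ∀ L : Set IForm, SuperIntuitionistic L → Ax ⊆ L → φ ∈ L}
/-- The upsets of a preorder. -/
abbrev Ups (X : Type) [Preorder X] : Type := {U : Set X // IsUpperSet U}

/-- Intersection of upsets. -/
def upsInter {X : Type} [Preorder X] (U V : Ups X) : Ups X := ⟨U.1 ∩ V.1, U.2.inter V.2⟩

/-- Union of upsets. -/
def upsUnion {X : Type} [Preorder X] (U V : Ups X) : Ups X := ⟨U.1 ∪ V.1, U.2.union V.2⟩

/-- Heyting implication of upsets: `U → V = {x : ↑x ∩ U ⊆ V}`. -/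
def upsHimp {X : Type} [Preorder X] (U V : Ups X) : Ups X :=
  ⟨{x | ∀ y, x ≤ y → y ∈ U.1 → y ∈ V.1}, by
    intro a b hab ha y hby hyU
    exact ha y (le_trans hab hby) hyU⟩

/-- The empty upset. -/
def upsEmpty {X : Type} [Preorder X] : Ups X := ⟨∅, isUpperSet_empty⟩

/-- Finite conjunction. -/
def bigConj : List IForm → IForm
  | [] => IForm.bot.imp IForm.bot
  | φ :: l => φ.and (bigConj l)

/-- The Jankov formula of a finite rooted poset `X` with root `r`: choosing a
distinct variable `p_U` for each upset `U` of `X`, it is `δ → p_s`, where `δ`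
is the conjunction of `p_{U∩V} ↔ p_U ∧ p_V`, `p_{U∪V} ↔ p_U ∨ p_V`,
`p_{U→V} ↔ (p_U → p_V)` over all upsets `U, V`, together with `p_∅ ↔ ⊥`, and
`s = X ∖ {r}` is the second largest element of `Up(X)`. -/
noncomputable def jankov (X : Type) [Fintype X] [PartialOrder X] (r : X)
    (hr : ∀ x, r ≤ x) : IForm :=
  letI : Fintype (Ups X) := Fintype.ofFinite _
  let e : Ups X ≃ Fin (Fintype.card (Ups X)) := Fintype.equivFin (Ups X)
  let p : Ups X → IForm := fun U => IForm.var (e U).val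
  let all : List (Ups X) := (List.finRange (Fintype.card (Ups X))).map e.symm
  let triple : Ups X → Ups X → IForm := fun U V =>
    ((p (upsInter U V)).biimp ((p U).and (p V))).and
      (((p (upsUnion U V)).biimp ((p U).or (p V))).and
        ((p (upsHimp U V)).biimp ((p U).imp (p V))))
  let δ : IForm :=
    (bigConj (all.map fun U => bigConj (all.map fun V => triple U V))).and
      ((p upsEmpty).biimp IForm.bot)
  let s : Ups X := ⟨Set.univ \ {r}, by
    intro a b hab ha
    simp only [Set.mem_diff, Set.mem_univ, Set.mem_singleton_iff, true_and] at ha ⊢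
    intro hb
    exact ha (le_antisymm (hb ▸ hab) (hr a))⟩
  δ.imp (p s)

/-- A formula is a Jankov formula if it is the Jankov formula of some finite
rooted poset. -/
def IsJankovFormula (φ : IForm) : Prop :=
  ∃ (X : Type) (i1 : Fintype X) (i2 : PartialOrder X) (r : X)
    (hr : ∀ x : X, i2.le r x), φ = @jankov X i1 i2 r hr
/-- An si-logic is axiomatizable by Jankov formulas if it is the least si-logic
containing some set of Jankov formulas of finite rooted posets. -/
def JankovAxiomatizable (L : Set IForm) : Prop :=
  ∃ Ax : Set IForm, (∀ φ ∈ Ax, IsJankovFormula φ) ∧ L = IPCPlus Ax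
/-- `L⁺ = Log(Fin(L))`: the logic of the finite posets validating `L`. -/
def LPlus (L : Set IForm) : Set IForm :=
  {φ | ∀ (X : Type) [Fintype X] [PartialOrder X], ValidLogic X L → ValidIn X φ}

/-- A logic has the finite model property if it is the logic of its finite
posets. -/
def HasFMP (L : Set IForm) : Prop := L = LPlus L
/-- `L⁻ = IPC + {𝒥(X) : X a finite rooted poset not validating L}`. -/
def LMinus (L : Set IForm) : Set IForm :=
  IPCPlus {φ | ∃ (X : Type) (i1 : Fintype X) (i2 : PartialOrder X) (r : X)
    (hr : ∀ x : X, i2.le r x),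
      ¬(@ValidLogic X i2.toPreorder L) ∧ φ = @jankov X i1 i2 r hr}

/-! ### Auxiliary machinery -/

namespace JK

open IForm

/-- Natural deduction from a list of hypotheses. -/
inductive ND : List IForm → IForm → Prop
  | hyp {Γ φ} (h : φ ∈ Γ) : ND Γ φ
  | axm {Γ φ} (h : IPC φ) : ND Γ φ
  | mp {Γ φ ψ} (h1 : ND Γ (φ.imp ψ)) (h2 : ND Γ φ) : ND Γ ψ

theorem ipc_imp_refl (φ : IForm) : IPC (φ.imp φ) :=
  IPC.mp _ _ (IPC.mp _ _ (IPC.ax2 φ (φ.imp φ) φ) (IPC.ax1 φ (φ.imp φ))) (IPC.ax1 φ φ)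

theorem nd_weaken {Γ Γ' : List IForm} {φ} (h : ND Γ φ) (hs : ∀ ψ ∈ Γ, ψ ∈ Γ') : ND Γ' φ := by
  induction h with
  | hyp h => exact ND.hyp (hs _ h)
  | axm h => exact ND.axm h
  | mp h1 h2 ih1 ih2 => exact ND.mp ih1 ih2

theorem nd_weaken_cons {Γ : List IForm} {γ φ} (h : ND Γ φ) : ND (γ :: Γ) φ :=
  nd_weaken h fun _ hψ => List.mem_cons_of_mem _ hψ

theorem nd_hyp_head {Γ : List IForm} {γ} : ND (γ :: Γ) γ := ND.hyp List.mem_cons_self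

theorem nd_ded {Γ : List IForm} {γ φ} (h : ND (γ :: Γ) φ) : ND Γ (γ.imp φ) := by
  induction h with
  | hyp h =>
    rcases List.mem_cons.1 h with rfl | h
    · exact ND.axm (ipc_imp_refl _)
    · exact ND.mp (ND.axm (IPC.ax1 _ _)) (ND.hyp h)
  | axm h => exact ND.mp (ND.axm (IPC.ax1 _ _)) (ND.axm h)
  | mp h1 h2 ih1 ih2 => exact ND.mp (ND.mp (ND.axm (IPC.ax2 _ _ _)) ih1) ih2

theorem nd_nil {φ} (h : ND [] φ) : IPC φ := by
  induction h with
  | hyp h => exact absurd h List.not_mem_nil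
  | axm h => exact h
  | mp h1 h2 ih1 ih2 => exact IPC.mp _ _ ih1 ih2

variable {Γ : List IForm} {A A' B B' C φ ψ χ : IForm}

theorem nd_andI (h1 : ND Γ φ) (h2 : ND Γ ψ) : ND Γ (φ.and ψ) :=
  ND.mp (ND.mp (ND.axm (IPC.andI _ _)) h1) h2

theorem nd_andE1 (h : ND Γ (φ.and ψ)) : ND Γ φ := ND.mp (ND.axm (IPC.andE1 _ _)) h

theorem nd_andE2 (h : ND Γ (φ.and ψ)) : ND Γ ψ := ND.mp (ND.axm (IPC.andE2 _ _)) h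

theorem nd_imp_trans (h1 : ND Γ (φ.imp ψ)) (h2 : ND Γ (ψ.imp χ)) : ND Γ (φ.imp χ) :=
  nd_ded (ND.mp (nd_weaken_cons h2) (ND.mp (nd_weaken_cons h1) nd_hyp_head))

theorem nd_biimpI (h1 : ND Γ (φ.imp ψ)) (h2 : ND Γ (ψ.imp φ)) : ND Γ (φ.biimp ψ) :=
  nd_andI h1 h2

theorem nd_biimp_fwd (h : ND Γ (φ.biimp ψ)) : ND Γ (φ.imp ψ) := nd_andE1 h

theorem nd_biimp_bwd (h : ND Γ (φ.biimp ψ)) : ND Γ (ψ.imp φ) := nd_andE2 h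

theorem nd_biimp_refl : ND Γ (φ.biimp φ) :=
  nd_biimpI (ND.axm (ipc_imp_refl _)) (ND.axm (ipc_imp_refl _))

theorem nd_biimp_symm (h : ND Γ (φ.biimp ψ)) : ND Γ (ψ.biimp φ) :=
  nd_biimpI (nd_biimp_bwd h) (nd_biimp_fwd h)

theorem nd_biimp_trans (h1 : ND Γ (φ.biimp ψ)) (h2 : ND Γ (ψ.biimp χ)) : ND Γ (φ.biimp χ) :=
  nd_biimpI (nd_imp_trans (nd_biimp_fwd h1) (nd_biimp_fwd h2))
    (nd_imp_trans (nd_biimp_bwd h2) (nd_biimp_bwd h1))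

theorem nd_biimp_mp (h : ND Γ (φ.biimp ψ)) (hφ : ND Γ φ) : ND Γ ψ :=
  ND.mp (nd_biimp_fwd h) hφ

theorem nd_and_mono (h1 : ND Γ (A.imp A')) (h2 : ND Γ (B.imp B')) :
    ND Γ ((A.and B).imp (A'.and B')) :=
  nd_ded (nd_andI (ND.mp (nd_weaken_cons h1) (nd_andE1 nd_hyp_head))
    (ND.mp (nd_weaken_cons h2) (nd_andE2 nd_hyp_head)))

theorem nd_or_mono (h1 : ND Γ (A.imp A')) (h2 : ND Γ (B.imp B')) :
    ND Γ ((A.or B).imp (A'.or B')) :=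
  ND.mp (ND.mp (ND.axm (IPC.orE A B (A'.or B'))) (nd_imp_trans h1 (ND.axm (IPC.orI1 _ _))))
    (nd_imp_trans h2 (ND.axm (IPC.orI2 _ _)))

theorem nd_imp_mono (h1 : ND Γ (A'.imp A)) (h2 : ND Γ (B.imp B')) :
    ND Γ ((A.imp B).imp (A'.imp B')) :=
  nd_ded (nd_imp_trans (nd_weaken_cons h1) (nd_imp_trans nd_hyp_head (nd_weaken_cons h2)))

theorem nd_cong_and (h1 : ND Γ (A.biimp A')) (h2 : ND Γ (B.biimp B')) :
    ND Γ ((A.and B).biimp (A'.and B')) :=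
  nd_biimpI (nd_and_mono (nd_biimp_fwd h1) (nd_biimp_fwd h2))
    (nd_and_mono (nd_biimp_bwd h1) (nd_biimp_bwd h2))

theorem nd_cong_or (h1 : ND Γ (A.biimp A')) (h2 : ND Γ (B.biimp B')) :
    ND Γ ((A.or B).biimp (A'.or B')) :=
  nd_biimpI (nd_or_mono (nd_biimp_fwd h1) (nd_biimp_fwd h2))
    (nd_or_mono (nd_biimp_bwd h1) (nd_biimp_bwd h2))

theorem nd_cong_imp (h1 : ND Γ (A.biimp A')) (h2 : ND Γ (B.biimp B')) :
    ND Γ ((A.imp B).biimp (A'.imp B')) :=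
  nd_biimpI (nd_imp_mono (nd_biimp_bwd h1) (nd_biimp_fwd h2))
    (nd_imp_mono (nd_biimp_fwd h1) (nd_biimp_bwd h2))

theorem nd_bigConj_elim {l : List IForm} (h : ND Γ (bigConj l)) (hm : φ ∈ l) : ND Γ φ := by
  induction l with
  | nil => exact absurd hm List.not_mem_nil
  | cons a l ih =>
    rcases List.mem_cons.1 hm with rfl | hm
    · exact nd_andE1 h
    · exact ih (nd_andE2 h) hm

/-! ### Semantic lemmas -/

theorem forces_mono {X : Type} [Preorder X] {v : ℕ → Set X} (hv : ∀ n, IsUpperSet (v n))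
    (φ : IForm) : ∀ {x y : X}, x ≤ y → Forces v x φ → Forces v y φ := by
  induction φ with
  | var n => exact fun hxy h => hv n hxy h
  | bot => exact fun _ h => h.elim
  | and φ ψ ihφ ihψ => exact fun hxy h => ⟨ihφ hxy h.1, ihψ hxy h.2⟩
  | or φ ψ ihφ ihψ => exact fun hxy h => h.elim (fun h => Or.inl (ihφ hxy h)) (fun h => Or.inr (ihψ hxy h))
  | imp φ ψ ihφ ihψ => exact fun hxy h z hz hφ => h z (le_trans hxy hz) hφ

theorem forces_subtype {X : Type} [Preorder X] {x : X} (v : ℕ → Set X) (φ : IForm) :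
    ∀ y : {z : X // x ≤ z}, Forces (fun n => Subtype.val ⁻¹' v n) y φ ↔ Forces v y.1 φ := by
  induction φ with
  | var n => exact fun y => Iff.rfl
  | bot => exact fun y => Iff.rfl
  | and φ ψ ihφ ihψ => exact fun y => and_congr (ihφ y) (ihψ y)
  | or φ ψ ihφ ihψ => exact fun y => or_congr (ihφ y) (ihψ y)
  | imp φ ψ ihφ ihψ =>
    intro y
    constructor
    · intro h z hz hφ
      have hxz : x ≤ z := le_trans y.2 hz
      exact (ihψ ⟨z, hxz⟩).1 (h ⟨z, hxz⟩ hz ((ihφ ⟨z, hxz⟩).2 hφ))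
    · intro h z hz hφ
      exact (ihψ z).2 (h z.1 hz ((ihφ z).1 hφ))

theorem forces_bigConj {X : Type} [Preorder X] {v : ℕ → Set X} {x : X} {l : List IForm} :
    Forces v x (bigConj l) ↔ ∀ φ ∈ l, Forces v x φ := by
  induction l with
  | nil => simp [bigConj, Forces]
  | cons a l ih =>
    simp only [bigConj, Forces, ih, List.mem_cons]
    constructor
    · rintro ⟨h1, h2⟩ φ (rfl | hφ)
      · exact h1
      · exact h2 φ hφ
    · intro h
      exact ⟨h a (Or.inl rfl), fun φ hφ => h φ (Or.inr hφ)⟩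

/-! ### Explicit form of the Jankov formula -/

def pvar {X : Type} [Preorder X] (g : Ups X → ℕ) (U : Ups X) : IForm := IForm.var (g U)

def tripleF {X : Type} [Preorder X] (g : Ups X → ℕ) (U V : Ups X) : IForm :=
  ((pvar g (upsInter U V)).biimp ((pvar g U).and (pvar g V))).and
    (((pvar g (upsUnion U V)).biimp ((pvar g U).or (pvar g V))).and
      ((pvar g (upsHimp U V)).biimp ((pvar g U).imp (pvar g V))))

def deltaF {X : Type} [Preorder X] (g : Ups X → ℕ) (all : List (Ups X)) : IForm :=
  (bigConj (all.map fun U => bigConj (all.map fun V => tripleF g U V))).and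
    ((pvar g upsEmpty).biimp IForm.bot)

def jankovF {X : Type} [Preorder X] (g : Ups X → ℕ) (all : List (Ups X)) (s : Ups X) : IForm :=
  (deltaF g all).imp (pvar g s)

theorem jankov_eq (X : Type) [Fintype X] [PartialOrder X] (r : X) (hr : ∀ x, r ≤ x) :
    jankov X r hr =
      (letI : Fintype (Ups X) := Fintype.ofFinite _
       jankovF (fun U => ((Fintype.equivFin (Ups X)) U).val)
        ((List.finRange (Fintype.card (Ups X))).map (Fintype.equivFin (Ups X)).symm)
        ⟨Set.univ \ {r}, by
          intro a b hab ha
          simp only [Set.mem_diff, Set.mem_univ, Set.mem_singleton_iff, true_and] at ha ⊢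
          intro hb
          exact ha (le_antisymm (hb ▸ hab) (hr a))⟩) := rfl

end JK
namespace JK

theorem delta_triple {X : Type} [Preorder X] {g : Ups X → ℕ} {all : List (Ups X)}
    (hall : ∀ U, U ∈ all) {Γ : List IForm} (hδ : ND Γ (deltaF g all)) (U V : Ups X) :
    ND Γ (tripleF g U V) := by
  have h1 : ND Γ (bigConj (all.map fun U => bigConj (all.map fun V => tripleF g U V))) :=
    nd_andE1 hδ
  have h2 : ND Γ (bigConj (all.map fun V => tripleF g U V)) :=
    nd_bigConj_elim h1 (List.mem_map_of_mem (hall U))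
  exact nd_bigConj_elim h2 (List.mem_map_of_mem (hall V))

theorem jankovF_mem {X : Type} [Fintype X] [PartialOrder X]
    (g : Ups X → ℕ) (all : List (Ups X)) (hall : ∀ U, U ∈ all)
    (r : X) (hr : ∀ x, r ≤ x) (s : Ups X) (hs : s.1 = Set.univ \ {r})
    (L' : Set IForm) (hL' : SuperIntuitionistic L')
    (φ₀ : IForm) (hφ₀ : φ₀ ∈ L')
    (v : ℕ → Set X) (hv : ∀ n, IsUpperSet (v n))
    (y₀ : X) (hy₀ : ¬ Forces v y₀ φ₀) :
    jankovF g all s ∈ L' := by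
  set σ : ℕ → IForm := fun n => pvar g ⟨v n, hv n⟩ with hσ
  have hFup : ∀ ψ : IForm, IsUpperSet {x : X | Forces v x ψ} :=
    fun ψ _ _ hab h => forces_mono hv ψ hab h
  set Fm : IForm → Ups X := fun ψ => ⟨{x | Forces v x ψ}, hFup ψ⟩ with hFm
  -- main induction
  have main : ∀ (ψ : IForm) (Γ : List IForm), ND Γ (deltaF g all) →
      ND Γ ((ψ.subst σ).biimp (pvar g (Fm ψ))) := by
    intro ψ
    induction ψ with
    | var n =>
      intro Γ hδ
      have he : Fm (IForm.var n) = ⟨v n, hv n⟩ := Subtype.ext rfl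
      rw [he]
      exact nd_biimp_refl
    | bot =>
      intro Γ hδ
      have he : Fm IForm.bot = upsEmpty := Subtype.ext (by
        ext x; exact iff_of_false id (fun h => h))
      rw [he]
      exact nd_biimp_symm (nd_andE2 hδ)
    | and ψ1 ψ2 ih1 ih2 =>
      intro Γ hδ
      have he : Fm (ψ1.and ψ2) = upsInter (Fm ψ1) (Fm ψ2) := Subtype.ext rfl
      rw [he]
      have htr := nd_andE1 (delta_triple hall hδ (Fm ψ1) (Fm ψ2))
      exact nd_biimp_trans (nd_cong_and (ih1 Γ hδ) (ih2 Γ hδ)) (nd_biimp_symm htr)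
    | or ψ1 ψ2 ih1 ih2 =>
      intro Γ hδ
      have he : Fm (ψ1.or ψ2) = upsUnion (Fm ψ1) (Fm ψ2) := Subtype.ext rfl
      rw [he]
      have htr := nd_andE1 (nd_andE2 (delta_triple hall hδ (Fm ψ1) (Fm ψ2)))
      exact nd_biimp_trans (nd_cong_or (ih1 Γ hδ) (ih2 Γ hδ)) (nd_biimp_symm htr)
    | imp ψ1 ψ2 ih1 ih2 =>
      intro Γ hδ
      have he : Fm (ψ1.imp ψ2) = upsHimp (Fm ψ1) (Fm ψ2) := Subtype.ext rfl
      rw [he]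
      have htr := nd_andE2 (nd_andE2 (delta_triple hall hδ (Fm ψ1) (Fm ψ2)))
      exact nd_biimp_trans (nd_cong_imp (ih1 Γ hδ) (ih2 Γ hδ)) (nd_biimp_symm htr)
  -- the key derivation
  set Γ : List IForm := [deltaF g all, φ₀.subst σ] with hΓ
  have hδ : ND Γ (deltaF g all) := nd_hyp_head
  have hσφ : ND Γ (φ₀.subst σ) := ND.hyp (by simp [hΓ])
  have hpF : ND Γ (pvar g (Fm φ₀)) := nd_biimp_mp (main φ₀ Γ hδ) hσφ
  -- Fm φ₀ ⊆ s
  have hsub : (Fm φ₀).1 ⊆ s.1 := by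
    rw [hs]
    intro z hz
    refine ⟨trivial, ?_⟩
    intro hzr
    apply hy₀
    have : Forces v z φ₀ := hz
    exact forces_mono hv φ₀ (hzr ▸ hr y₀) this
  have hUnion : upsUnion (Fm φ₀) s = s := Subtype.ext (Set.union_eq_right.2 hsub)
  have hOr : ND Γ ((pvar g s).biimp ((pvar g (Fm φ₀)).or (pvar g s))) := by
    have := nd_andE1 (nd_andE2 (delta_triple hall hδ (Fm φ₀) s))
    rwa [hUnion] at this
  have hps : ND Γ (pvar g s) :=
    nd_biimp_mp (nd_biimp_symm hOr) (ND.mp (ND.axm (IPC.orI1 _ _)) hpF)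
  have d2 : IPC ((φ₀.subst σ).imp ((deltaF g all).imp (pvar g s))) := by
    have d1 : ND [φ₀.subst σ] ((deltaF g all).imp (pvar g s)) := nd_ded hps
    exact nd_nil (nd_ded d1)
  exact hL'.2.1 _ _ (hL'.1 _ d2) (hL'.2.2 φ₀ σ hφ₀)

end JK
namespace JK

theorem jankovF_refuted {X : Type} [Fintype X] [PartialOrder X]
    (g : Ups X → ℕ) (hg : Function.Injective g) (all : List (Ups X))
    (r : X) (hr : ∀ x, r ≤ x) (s : Ups X) (hs : s.1 = Set.univ \ {r}) :
    ∃ w : ℕ → Set X, (∀ n, IsUpperSet (w n)) ∧ ¬ Forces w r (jankovF g all s) := by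
  classical
  set w : ℕ → Set X := fun n => ⋃ (U : Ups X) (_ : g U = n), U.1 with hw
  have hwu : ∀ n, IsUpperSet (w n) := by
    intro n a b hab ha
    simp only [hw, Set.mem_iUnion] at ha ⊢
    obtain ⟨U, hU, haU⟩ := ha
    exact ⟨U, hU, U.2 hab haU⟩
  have hp : ∀ (U : Ups X) (x : X), Forces w x (pvar g U) ↔ x ∈ U.1 := by
    intro U x
    show x ∈ w (g U) ↔ x ∈ U.1
    simp only [hw, Set.mem_iUnion]
    constructor
    · rintro ⟨V, hV, hxV⟩
      rwa [hg hV] at hxV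
    · intro h; exact ⟨U, rfl, h⟩
  have hδ : ∀ x, Forces w x (deltaF g all) := by
    intro x
    constructor
    · rw [forces_bigConj]
      intro φ hφ
      simp only [List.mem_map] at hφ
      obtain ⟨U, hU, rfl⟩ := hφ
      rw [forces_bigConj]
      intro φ hφ
      simp only [List.mem_map] at hφ
      obtain ⟨V, hV, rfl⟩ := hφ
      refine ⟨⟨?_, ?_⟩, ⟨?_, ?_⟩, ⟨?_, ?_⟩⟩
      · intro y hy h
        rw [hp] at h
        exact ⟨(hp U y).2 h.1, (hp V y).2 h.2⟩
      · intro y hy h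
        rw [hp]
        exact ⟨(hp U y).1 h.1, (hp V y).1 h.2⟩
      · intro y hy h
        rw [hp] at h
        rcases h with h | h
        · exact Or.inl ((hp U y).2 h)
        · exact Or.inr ((hp V y).2 h)
      · intro y hy h
        rw [hp]
        rcases h with h | h
        · exact Or.inl ((hp U y).1 h)
        · exact Or.inr ((hp V y).1 h)
      · intro y hy h z hz hzU
        rw [hp] at h ⊢
        exact h z hz ((hp U z).1 hzU)
      · intro y hy h
        rw [hp]
        intro z hz hzU
        exact (hp V z).1 (h z hz ((hp U z).2 hzU))
    · constructor
      · intro y hy h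
        exact absurd ((hp upsEmpty y).1 h) (fun hh => hh)
      · intro y hy h
        exact h.elim
  refine ⟨w, hwu, ?_⟩
  intro hF
  have := hF r (le_refl r) (hδ r)
  rw [hp, hs] at this
  exact this.2 rfl

end JK
namespace JK

theorem root_diff_upper {X : Type} [PartialOrder X] {r : X} (hr : ∀ x, r ≤ x) :
    IsUpperSet (Set.univ \ {r} : Set X) := by
  intro a b hab ha
  simp only [Set.mem_diff, Set.mem_univ, Set.mem_singleton_iff, true_and] at ha ⊢
  intro hb
  exact ha (le_antisymm (hb ▸ hab) (hr a))

theorem jankov_mem (X : Type) [Fintype X] [PartialOrder X] (r : X) (hr : ∀ x, r ≤ x)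
    (L' : Set IForm) (hL' : SuperIntuitionistic L')
    (φ₀ : IForm) (hφ₀ : φ₀ ∈ L')
    (v : ℕ → Set X) (hv : ∀ n, IsUpperSet (v n))
    (y₀ : X) (hy₀ : ¬ Forces v y₀ φ₀) :
    jankov X r hr ∈ L' := by
  letI : Fintype (Ups X) := Fintype.ofFinite _
  have hall : ∀ U : Ups X,
      U ∈ (List.finRange (Fintype.card (Ups X))).map (Fintype.equivFin (Ups X)).symm :=
    fun U => List.mem_map.2 ⟨Fintype.equivFin (Ups X) U, List.mem_finRange _, by simp⟩
  exact jankovF_mem (fun U => ((Fintype.equivFin (Ups X)) U).val) _ hall r hr ⟨Set.univ \ {r}, root_diff_upper hr⟩ rfl L' hL' φ₀ hφ₀ v hv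
    y₀ hy₀

theorem jankov_refuted (X : Type) [Fintype X] [PartialOrder X] (r : X) (hr : ∀ x, r ≤ x) :
    ∃ w : ℕ → Set X, (∀ n, IsUpperSet (w n)) ∧ ¬ Forces w r (jankov X r hr) := by
  letI : Fintype (Ups X) := Fintype.ofFinite _
  have hg : Function.Injective (fun U : Ups X => ((Fintype.equivFin (Ups X)) U).val) :=
    fun U V h => (Fintype.equivFin (Ups X)).injective (Fin.val_injective h)
  exact jankovF_refuted (fun U : Ups X => ((Fintype.equivFin (Ups X)) U).val) hg ((List.finRange (Fintype.card (Ups X))).map (Fintype.equivFin (Ups X)).symm) r hr ⟨Set.univ \ {r}, root_diff_upper hr⟩ rfl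

end JK
/-- **Theorem (fmp span is an interval).** For every si-logic `L`, the fmp span
of `L` is exactly the interval `[L⁻, L⁺]` in the lattice of si-logics. -/
theorem fmpSpan_eq_interval (L : Set IForm) (hL : SuperIntuitionistic L) :
    fmpSpan L = {L' | SuperIntuitionistic L' ∧ LMinus L ⊆ L' ∧ L' ⊆ LPlus L} := by
  ext L'
  simp only [fmpSpan, Set.mem_setOf_eq]
  constructor
  · rintro ⟨hSI, hSame⟩
    refine ⟨hSI, ?_, ?_⟩
    · intro φ hφ
      refine hφ L' hSI ?_
      rintro ψ ⟨X, i1, i2, r, hr, hnv, rfl⟩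
      have hnv' : ¬ @ValidLogic X i2.toPreorder L' := fun h => hnv ((hSame X).mpr h)
      simp only [ValidLogic, ValidIn] at hnv'
      push_neg at hnv'
      obtain ⟨φ₀, hφ₀, v, hv, y, hy⟩ := hnv'
      exact JK.jankov_mem X r hr L' hSI φ₀ hφ₀ v hv y hy
    · intro φ hφ X _ _ hXL
      exact (hSame X).mp hXL φ hφ
  · rintro ⟨hSI, hMin, hPlus⟩
    refine ⟨hSI, ?_⟩
    intro X _ _
    constructor
    · intro hXL φ hφ
      exact hPlus hφ X hXL
    · intro hXL'
      by_contra hXL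
      simp only [ValidLogic, ValidIn] at hXL
      push_neg at hXL
      obtain ⟨φ, hφL, v, hv, x, hx⟩ := hXL
      set S := {z : X // x ≤ z} with hS
      letI : Fintype S := Fintype.ofFinite S
      have hroot : ∀ z : S, (⟨x, le_refl x⟩ : S) ≤ z := fun z => z.2
      have hSnv : ¬ ValidLogic S L := by
        intro h
        apply hx
        have hv' : ∀ n, IsUpperSet (Subtype.val ⁻¹' v n : Set S) :=
          fun n a b hab ha => hv n hab ha
        have := h φ hφL (fun n => Subtype.val ⁻¹' v n) hv' ⟨x, le_refl x⟩
        exact (JK.forces_subtype v φ ⟨x, le_refl x⟩).1 this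
      have hjm : jankov S ⟨x, le_refl x⟩ hroot ∈ L' := by
        apply hMin
        intro M hM hsub
        exact hsub ⟨S, inferInstance, inferInstance, ⟨x, le_refl x⟩, hroot, hSnv, rfl⟩
      obtain ⟨w, hw, hwref⟩ := JK.jankov_refuted S ⟨x, le_refl x⟩ hroot
      set W : ℕ → Set X := fun n => Subtype.val '' w n with hW
      have hWu : ∀ n, IsUpperSet (W n) := by
        intro n a b hab ha
        obtain ⟨⟨a0, ha0⟩, haw, rfl⟩ := ha
        exact ⟨⟨b, le_trans ha0 hab⟩,
          hw n (show (⟨a0, ha0⟩ : S) ≤ ⟨b, le_trans ha0 hab⟩ from hab) haw, rfl⟩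
      apply hwref
      have hpre : (fun n => (Subtype.val ⁻¹' W n : Set S)) = w := by
        funext n
        exact Set.preimage_image_eq _ Subtype.val_injective
      have h1 := hXL' _ hjm W hWu x
      have h2 := (JK.forces_subtype (x := x) W (jankov S ⟨x, le_refl x⟩ hroot)
        ⟨x, le_refl x⟩).2 h1
      rwa [hpre] at h2
end

section
/- For every si-logic L, the logic L⁻ = IPC + {𝒥(X) : X a finite rooted poset not validating L} belongs to the fmp span of L, is axiomatizable by Jankov formulas, and is the only member of fmp(L) that is axiomatizable by Jankov formulas. -/
/-! ### Auxiliary development -/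

section Aux

/-- Derivability from a set of hypotheses. -/
inductive Der : Set IForm → IForm → Prop
  | hyp {Γ : Set IForm} {φ : IForm} : φ ∈ Γ → Der Γ φ
  | ipc {Γ : Set IForm} {φ : IForm} : IPC φ → Der Γ φ
  | mp {Γ : Set IForm} {φ ψ : IForm} : Der Γ (φ.imp ψ) → Der Γ φ → Der Γ ψ

lemma ipc_id (φ : IForm) : IPC (φ.imp φ) :=
  IPC.mp _ _ (IPC.mp _ _ (IPC.ax2 φ (φ.imp φ) φ) (IPC.ax1 φ (φ.imp φ))) (IPC.ax1 φ φ)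

lemma Der.weak {Γ Γ' : Set IForm} {φ : IForm} (h : Der Γ φ) (hs : Γ ⊆ Γ') : Der Γ' φ := by
  induction h with
  | hyp h => exact Der.hyp (hs h)
  | ipc h => exact Der.ipc h
  | mp _ _ ih1 ih2 => exact Der.mp ih1 ih2

lemma Der.w1 {Γ : Set IForm} {φ ψ : IForm} (h : Der Γ φ) : Der (insert ψ Γ) φ :=
  h.weak (Set.subset_insert _ _)

lemma Der.hyp0 {Γ : Set IForm} {φ : IForm} : Der (insert φ Γ) φ := Der.hyp (Set.mem_insert _ _)

lemma Der.hyp1 {Γ : Set IForm} {φ ψ : IForm} : Der (insert φ (insert ψ Γ)) ψ :=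
  Der.hyp (Set.mem_insert_of_mem _ (Set.mem_insert _ _))

lemma Der.impI_aux {Δ : Set IForm} {φ : IForm} (h : Der Δ φ) :
    ∀ {Γ : Set IForm} {ψ : IForm}, Δ = insert ψ Γ → Der Γ (ψ.imp φ) := by
  induction h with
  | hyp h =>
    intro Γ ψ hΓ
    subst hΓ
    rcases Set.mem_insert_iff.mp h with h | h
    · subst h; exact Der.ipc (ipc_id _)
    · exact Der.mp (Der.ipc (IPC.ax1 _ _)) (Der.hyp h)
  | ipc h => exact fun _ => Der.mp (Der.ipc (IPC.ax1 _ _)) (Der.ipc h)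
  | mp _ _ ih1 ih2 =>
    exact fun hΓ => Der.mp (Der.mp (Der.ipc (IPC.ax2 _ _ _)) (ih1 hΓ)) (ih2 hΓ)

/-- Deduction theorem. -/
lemma Der.impI {Γ : Set IForm} {φ ψ : IForm} (h : Der (insert ψ Γ) φ) : Der Γ (ψ.imp φ) :=
  h.impI_aux rfl

lemma Der.andE1' {Γ : Set IForm} {φ ψ : IForm} (h : Der Γ (φ.and ψ)) : Der Γ φ :=
  Der.mp (Der.ipc (IPC.andE1 _ _)) h

lemma Der.andE2' {Γ : Set IForm} {φ ψ : IForm} (h : Der Γ (φ.and ψ)) : Der Γ ψ :=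
  Der.mp (Der.ipc (IPC.andE2 _ _)) h

lemma Der.andI' {Γ : Set IForm} {φ ψ : IForm} (h1 : Der Γ φ) (h2 : Der Γ ψ) :
    Der Γ (φ.and ψ) :=
  Der.mp (Der.mp (Der.ipc (IPC.andI _ _)) h1) h2

lemma Der.orE' {Γ : Set IForm} {φ ψ χ : IForm} (h : Der Γ (φ.or ψ)) (h1 : Der Γ (φ.imp χ))
    (h2 : Der Γ (ψ.imp χ)) : Der Γ χ :=
  Der.mp (Der.mp (Der.mp (Der.ipc (IPC.orE _ _ _)) h1) h2) h

lemma Der.biimp_mp {Γ : Set IForm} {φ ψ : IForm} (h : Der Γ (φ.biimp ψ)) (h1 : Der Γ φ) :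
    Der Γ ψ :=
  Der.mp (Der.andE1' h) h1

lemma Der.biimp_mpr {Γ : Set IForm} {φ ψ : IForm} (h : Der Γ (φ.biimp ψ)) (h1 : Der Γ ψ) :
    Der Γ φ :=
  Der.mp (Der.andE2' h) h1

lemma Der.biimp_refl {Γ : Set IForm} (φ : IForm) : Der Γ (φ.biimp φ) :=
  Der.andI' (Der.ipc (ipc_id _)) (Der.ipc (ipc_id _))

lemma Der.biimp_symm {Γ : Set IForm} {φ ψ : IForm} (h : Der Γ (φ.biimp ψ)) :
    Der Γ (ψ.biimp φ) :=
  Der.andI' (Der.andE2' h) (Der.andE1' h)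

lemma Der.biimp_trans {Γ : Set IForm} {a b c : IForm} (h1 : Der Γ (a.biimp b))
    (h2 : Der Γ (b.biimp c)) : Der Γ (a.biimp c) := by
  refine Der.andI' (Der.impI ?_) (Der.impI ?_)
  · exact h2.w1.biimp_mp (h1.w1.biimp_mp Der.hyp0)
  · exact h1.w1.biimp_mpr (h2.w1.biimp_mpr Der.hyp0)

lemma Der.biimp_and_cong {Γ : Set IForm} {a a' b b' : IForm} (h1 : Der Γ (a.biimp a'))
    (h2 : Der Γ (b.biimp b')) : Der Γ ((a.and b).biimp (a'.and b')) := by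
  refine Der.andI' (Der.impI ?_) (Der.impI ?_)
  · exact Der.andI' (h1.w1.biimp_mp (Der.andE1' Der.hyp0)) (h2.w1.biimp_mp (Der.andE2' Der.hyp0))
  · exact Der.andI' (h1.w1.biimp_mpr (Der.andE1' Der.hyp0)) (h2.w1.biimp_mpr (Der.andE2' Der.hyp0))

lemma Der.biimp_or_cong {Γ : Set IForm} {a a' b b' : IForm} (h1 : Der Γ (a.biimp a'))
    (h2 : Der Γ (b.biimp b')) : Der Γ ((a.or b).biimp (a'.or b')) := by
  refine Der.andI' (Der.impI ?_) (Der.impI ?_)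
  · refine Der.orE' Der.hyp0 (Der.impI ?_) (Der.impI ?_)
    · exact Der.mp (Der.ipc (IPC.orI1 _ _)) (h1.w1.w1.biimp_mp Der.hyp0)
    · exact Der.mp (Der.ipc (IPC.orI2 _ _)) (h2.w1.w1.biimp_mp Der.hyp0)
  · refine Der.orE' Der.hyp0 (Der.impI ?_) (Der.impI ?_)
    · exact Der.mp (Der.ipc (IPC.orI1 _ _)) (h1.w1.w1.biimp_mpr Der.hyp0)
    · exact Der.mp (Der.ipc (IPC.orI2 _ _)) (h2.w1.w1.biimp_mpr Der.hyp0)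

lemma Der.biimp_imp_cong {Γ : Set IForm} {a a' b b' : IForm} (h1 : Der Γ (a.biimp a'))
    (h2 : Der Γ (b.biimp b')) : Der Γ ((a.imp b).biimp (a'.imp b')) := by
  refine Der.andI' (Der.impI (Der.impI ?_)) (Der.impI (Der.impI ?_))
  · exact h2.w1.w1.biimp_mp (Der.mp Der.hyp1 (h1.w1.w1.biimp_mpr Der.hyp0))
  · exact h2.w1.w1.biimp_mpr (Der.mp Der.hyp1 (h1.w1.w1.biimp_mp Der.hyp0))

lemma Der.bigConj_mem {Γ : Set IForm} {l : List IForm} {φ : IForm} (h : Der Γ (bigConj l))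
    (hm : φ ∈ l) : Der Γ φ := by
  induction l with
  | nil => simp at hm
  | cons a l ih =>
    rcases List.mem_cons.mp hm with h' | h'
    · subst h'; exact Der.andE1' h
    · exact ih (Der.andE2' h) h'

lemma der_empty_ipc {φ : IForm} (h : Der ∅ φ) : IPC φ := by
  have aux : ∀ {Δ : Set IForm} {φ : IForm}, Der Δ φ → Δ = ∅ → IPC φ := by
    intro Δ φ h
    induction h with
    | hyp h => intro hΓ; subst hΓ; exact absurd h (Set.notMem_empty _)
    | ipc h => exact fun _ => h
    | mp _ _ ih1 ih2 => exact fun hΓ => IPC.mp _ _ (ih1 hΓ) (ih2 hΓ)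
  exact aux h rfl

lemma ipc_swap {a b c : IForm} (h : IPC (a.imp (b.imp c))) : IPC (b.imp (a.imp c)) := by
  apply der_empty_ipc
  refine Der.impI (Der.impI ?_)
  exact Der.mp (Der.mp (Der.ipc h) Der.hyp0) Der.hyp1

/-! ### Semantic lemmas -/

lemma forces_mono {X : Type} [Preorder X] {v : ℕ → Set X} (hv : ∀ n, IsUpperSet (v n))
    {φ : IForm} : ∀ {x y : X}, x ≤ y → Forces v x φ → Forces v y φ := by
  induction φ with
  | var n =>
    intro x y hxy h
    exact hv n hxy h
  | bot =>
    intro x y _ h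
    exact h.elim
  | and φ ψ ih1 ih2 =>
    intro x y hxy h
    exact ⟨ih1 hxy h.1, ih2 hxy h.2⟩
  | or φ ψ ih1 ih2 =>
    intro x y hxy h
    exact h.elim (fun h => Or.inl (ih1 hxy h)) (fun h => Or.inr (ih2 hxy h))
  | imp φ ψ _ _ =>
    intro x y hxy h z hz
    exact h z (le_trans hxy hz)

lemma ipc_sound {X : Type} [Preorder X] {φ : IForm} (h : IPC φ) : ValidIn X φ := by
  induction h with
  | ax1 φ ψ => exact fun v hv x y _ hφ z hz _ => forces_mono hv hz hφ
  | ax2 φ ψ χ =>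
    intro v hv x y _ h1 z hz h2 u hu h3
    exact h1 u (le_trans hz hu) h3 u le_rfl (h2 u hu h3)
  | andE1 φ ψ => exact fun v hv x y _ h => h.1
  | andE2 φ ψ => exact fun v hv x y _ h => h.2
  | andI φ ψ => exact fun v hv x y _ h1 z hz h2 => ⟨forces_mono hv hz h1, h2⟩
  | orI1 φ ψ => exact fun v hv x y _ h => Or.inl h
  | orI2 φ ψ => exact fun v hv x y _ h => Or.inr h
  | orE φ ψ χ =>
    intro v hv x y _ h1 z hz h2 u hu h3
    exact h3.elim (fun h => h1 u (le_trans hz hu) h) (fun h => h2 u hu h)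
  | exfalso φ => exact fun v hv x y _ h => h.elim
  | mp φ ψ _ _ ih1 ih2 => exact fun v hv x => ih1 v hv x x le_rfl (ih2 v hv x)

lemma forces_subst {X : Type} [Preorder X] (v : ℕ → Set X) (σ : ℕ → IForm) (φ : IForm) :
    ∀ x, Forces v x (φ.subst σ) ↔ Forces (fun n => {y | Forces v y (σ n)}) x φ := by
  induction φ with
  | var n => intro x; simp [IForm.subst, Forces]
  | bot => intro x; simp [IForm.subst, Forces]
  | and φ ψ ih1 ih2 => intro x; simp only [IForm.subst, Forces, ih1, ih2]
  | or φ ψ ih1 ih2 => intro x; simp only [IForm.subst, Forces, ih1, ih2]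
  | imp φ ψ ih1 ih2 =>
    intro x
    simp only [IForm.subst, Forces]
    exact forall_congr' fun y => imp_congr Iff.rfl (imp_congr (ih1 y) (ih2 y))

lemma valid_si (X : Type) [Preorder X] : SuperIntuitionistic {φ | ValidIn X φ} := by
  refine ⟨fun φ h => ipc_sound h, fun φ ψ h1 h2 v hv x => h1 v hv x x le_rfl (h2 v hv x),
    fun φ σ h v hv x => ?_⟩
  rw [forces_subst]
  exact h (fun n => {y | Forces v y (σ n)}) (fun n _ _ hab ha => forces_mono hv hab ha) x

/-! ### IPCPlus lemmas -/

lemma ipcPlus_si (Ax : Set IForm) : SuperIntuitionistic (IPCPlus Ax) :=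
  ⟨fun φ h L hL _ => hL.1 φ h,
   fun φ ψ h1 h2 L hL hAx => hL.2.1 φ ψ (h1 L hL hAx) (h2 L hL hAx),
   fun φ σ h L hL hAx => hL.2.2 φ σ (h L hL hAx)⟩

lemma subset_ipcPlus (Ax : Set IForm) : Ax ⊆ IPCPlus Ax :=
  fun _ h _ _ hAx => hAx h

lemma ipcPlus_le {Ax L : Set IForm} (hL : SuperIntuitionistic L) (h : Ax ⊆ L) :
    IPCPlus Ax ⊆ L := fun φ hφ => hφ L hL h

/-! ### Jankov formula machinery -/

section JankovAux

variable (X : Type) [Fintype X] [PartialOrder X]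

noncomputable def jFin : Fintype (Ups X) := Fintype.ofFinite _

noncomputable def jE : Ups X ≃ Fin (@Fintype.card (Ups X) (jFin X)) :=
  @Fintype.equivFin (Ups X) (jFin X)

noncomputable def jP (U : Ups X) : IForm := IForm.var ((jE X) U).val

noncomputable def jAll : List (Ups X) :=
  (List.finRange (@Fintype.card (Ups X) (jFin X))).map (jE X).symm

noncomputable def jTriple (U V : Ups X) : IForm :=
  ((jP X (upsInter U V)).biimp ((jP X U).and (jP X V))).and
    (((jP X (upsUnion U V)).biimp ((jP X U).or (jP X V))).and
      ((jP X (upsHimp U V)).biimp ((jP X U).imp (jP X V))))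

noncomputable def jDelta : IForm :=
  (bigConj ((jAll X).map fun U => bigConj ((jAll X).map fun V => jTriple X U V))).and
    ((jP X upsEmpty).biimp IForm.bot)

def jS (r : X) (hr : ∀ x, r ≤ x) : Ups X :=
  ⟨Set.univ \ {r}, by
    intro a b hab ha
    simp only [Set.mem_diff, Set.mem_univ, Set.mem_singleton_iff, true_and] at ha ⊢
    intro hb
    exact ha (le_antisymm (hb ▸ hab) (hr a))⟩

lemma jankov_eq (r : X) (hr : ∀ x, r ≤ x) :
    jankov X r hr = (jDelta X).imp (jP X (jS X r hr)) := rfl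

lemma mem_jAll (U : Ups X) : U ∈ jAll X := by
  have : U = (jE X).symm ((jE X) U) := ((jE X).symm_apply_apply U).symm
  rw [this]
  exact List.mem_map_of_mem (List.mem_finRange _)

/-- The canonical valuation on `X`. -/
noncomputable def jVal (n : ℕ) : Set X :=
  ⋃ (U : Ups X) (_ : ((jE X) U).val = n), U.1

lemma jVal_upper (n : ℕ) : IsUpperSet (jVal X n) := by
  intro a b hab ha
  simp only [jVal, Set.mem_iUnion] at ha ⊢
  obtain ⟨U, h, hm⟩ := ha
  exact ⟨U, h, U.2 hab hm⟩

lemma jVal_apply (U : Ups X) : jVal X (((jE X) U).val) = U.1 := by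
  ext x
  simp only [jVal, Set.mem_iUnion]
  constructor
  · rintro ⟨V, h, hm⟩
    have : V = U := (jE X).injective (Fin.val_injective h)
    exact this ▸ hm
  · exact fun h => ⟨U, rfl, h⟩

lemma forces_jP (U : Ups X) (x : X) : Forces (jVal X) x (jP X U) ↔ x ∈ U.1 := by
  show x ∈ jVal X (((jE X) U).val) ↔ x ∈ U.1
  rw [jVal_apply]

lemma forces_bigConj {Y : Type} [Preorder Y] (v : ℕ → Set Y) (x : Y) (l : List IForm) :
    Forces v x (bigConj l) ↔ ∀ φ ∈ l, Forces v x φ := by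
  induction l with
  | nil => simp [bigConj, Forces]
  | cons a l ih => simp [bigConj, Forces, ih]

lemma forces_jTriple (U V : Ups X) (x : X) : Forces (jVal X) x (jTriple X U V) := by
  refine ⟨⟨?_, ?_⟩, ⟨?_, ?_⟩, ?_, ?_⟩
  · intro y _ h
    rw [forces_jP] at h
    exact ⟨(forces_jP X U y).mpr h.1, (forces_jP X V y).mpr h.2⟩
  · intro y _ h
    rw [forces_jP]
    exact ⟨(forces_jP X U y).mp h.1, (forces_jP X V y).mp h.2⟩
  · intro y _ h
    rw [forces_jP] at h
    exact h.elim (fun h => Or.inl ((forces_jP X U y).mpr h))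
      (fun h => Or.inr ((forces_jP X V y).mpr h))
  · intro y _ h
    rw [forces_jP]
    exact h.elim (fun h => Or.inl ((forces_jP X U y).mp h))
      (fun h => Or.inr ((forces_jP X V y).mp h))
  · intro y _ h z hz hU
    rw [forces_jP] at h
    exact (forces_jP X V z).mpr (h z hz ((forces_jP X U z).mp hU))
  · intro y _ h
    rw [forces_jP]
    intro z hz hU
    exact (forces_jP X V z).mp (h z hz ((forces_jP X U z).mpr hU))

lemma forces_jDelta (x : X) : Forces (jVal X) x (jDelta X) := by
  refine ⟨?_, ?_, ?_⟩
  · rw [forces_bigConj]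
    intro φ hφ
    rw [List.mem_map] at hφ
    obtain ⟨U, _, rfl⟩ := hφ
    rw [forces_bigConj]
    intro ψ hψ
    rw [List.mem_map] at hψ
    obtain ⟨V, _, rfl⟩ := hψ
    exact forces_jTriple X U V x
  · intro y _ h
    rw [forces_jP] at h
    exact absurd h (Set.notMem_empty _)
  · intro y _ h
    exact h.elim

lemma not_forces_jankov (r : X) (hr : ∀ x, r ≤ x) :
    ¬ Forces (jVal X) r (jankov X r hr) := by
  rw [jankov_eq]
  intro h
  have := h r le_rfl (forces_jDelta X r)
  rw [forces_jP] at this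
  exact this.2 rfl

lemma not_validIn_jankov (r : X) (hr : ∀ x, r ≤ x) : ¬ ValidIn X (jankov X r hr) := by
  intro h
  exact not_forces_jankov X r hr (h (jVal X) (jVal_upper X) r)

end JankovAux

/-! ### Generated submodels -/

section Submodel

variable {Y : Type} [PartialOrder Y] (x₀ : Y)

lemma forces_restrict (v : ℕ → Set Y) (φ : IForm) :
    ∀ z : {y : Y // x₀ ≤ y}, Forces (fun n => Subtype.val ⁻¹' v n) z φ ↔ Forces v z.val φ := by
  induction φ with
  | var n => intro z; rfl
  | bot => intro z; rfl
  | and φ ψ ih1 ih2 => intro z; exact and_congr (ih1 z) (ih2 z)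
  | or φ ψ ih1 ih2 => intro z; exact or_congr (ih1 z) (ih2 z)
  | imp φ ψ ih1 ih2 =>
    intro z
    constructor
    · intro h y hy hφ
      have hx : x₀ ≤ y := le_trans z.2 hy
      have := h ⟨y, hx⟩ hy ((ih1 ⟨y, hx⟩).mpr hφ)
      exact (ih2 ⟨y, hx⟩).mp this
    · intro h u hu hφ
      exact (ih2 u).mpr (h u.val hu ((ih1 u).mp hφ))

lemma preimage_upper {v : Set Y} (hv : IsUpperSet v) :
    IsUpperSet (Subtype.val ⁻¹' v : Set {y : Y // x₀ ≤ y}) :=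
  fun _ _ hab ha => hv hab ha

lemma image_upper {w : Set {y : Y // x₀ ≤ y}} (hw : IsUpperSet w) :
    IsUpperSet (Subtype.val '' w) := by
  rintro a b hab ⟨u, hu, rfl⟩
  have hx : x₀ ≤ b := le_trans u.2 hab
  exact ⟨⟨b, hx⟩, hw (show u ≤ ⟨b, hx⟩ from hab) hu, rfl⟩

/-- A refutation on the generated submodel `↑x₀` transfers to `Y`. -/
lemma refute_transfer (w : ℕ → Set {y : Y // x₀ ≤ y}) (hw : ∀ n, IsUpperSet (w n))
    (φ : IForm) (z : {y : Y // x₀ ≤ y}) (h : ¬ Forces w z φ) :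
    ¬ Forces (fun n => Subtype.val '' w n) z.val φ := by
  intro hf
  apply h
  have hpre : (fun n => Subtype.val ⁻¹' ((fun n => (Subtype.val '' w n : Set Y)) n)) = w := by
    funext n
    exact Subtype.val_injective.preimage_image (w n)
  have := (forces_restrict x₀ (fun n => Subtype.val '' w n) φ z).mpr hf
  rwa [hpre] at this

end Submodel

/-! ### The syntactic Jankov lemma -/

section Syntactic

variable (X : Type) [Fintype X] [PartialOrder X]

/-- Algebraic evaluation of a formula in the Heyting algebra of upsets. -/
def evalUps (w : ℕ → Ups X) : IForm → Ups X
  | .var n => w n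
  | .bot => upsEmpty
  | .and φ ψ => upsInter (evalUps w φ) (evalUps w ψ)
  | .or φ ψ => upsUnion (evalUps w φ) (evalUps w ψ)
  | .imp φ ψ => upsHimp (evalUps w φ) (evalUps w ψ)

lemma forces_evalUps (w : ℕ → Ups X) (φ : IForm) :
    ∀ x : X, Forces (fun n => (w n).1) x φ ↔ x ∈ (evalUps X w φ).1 := by
  induction φ with
  | var n => intro x; rfl
  | bot => intro x; simp [Forces, evalUps, upsEmpty]
  | and φ ψ ih1 ih2 => intro x; exact and_congr (ih1 x) (ih2 x)
  | or φ ψ ih1 ih2 => intro x; exact or_congr (ih1 x) (ih2 x)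
  | imp φ ψ ih1 ih2 =>
    intro x
    show (∀ y, x ≤ y → _ → _) ↔ ∀ y, x ≤ y → y ∈ _ → y ∈ _
    exact forall_congr' fun y => imp_congr Iff.rfl (imp_congr (ih1 y) (ih2 y))

lemma der_jTriple (U V : Ups X) : Der {jDelta X} (jTriple X U V) := by
  have hδ : Der {jDelta X} (jDelta X) := Der.hyp rfl
  have h1 := Der.andE1' hδ
  have h2 := Der.bigConj_mem h1
    (List.mem_map_of_mem (f := fun U => bigConj ((jAll X).map fun V => jTriple X U V)) (mem_jAll X U))
  exact Der.bigConj_mem h2 (List.mem_map_of_mem (f := jTriple X U) (mem_jAll X V))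

lemma der_main (w : ℕ → Ups X) (φ : IForm) :
    Der {jDelta X} ((φ.subst fun n => jP X (w n)).biimp (jP X (evalUps X w φ))) := by
  induction φ with
  | var n => exact Der.biimp_refl _
  | bot =>
    have hδ : Der {jDelta X} (jDelta X) := Der.hyp rfl
    exact Der.biimp_symm (Der.andE2' hδ)
  | and φ ψ ih1 ih2 =>
    refine Der.biimp_trans (Der.biimp_and_cong ih1 ih2) ?_
    exact Der.biimp_symm (Der.andE1' (der_jTriple X (evalUps X w φ) (evalUps X w ψ)))
  | or φ ψ ih1 ih2 =>
    refine Der.biimp_trans (Der.biimp_or_cong ih1 ih2) ?_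
    exact Der.biimp_symm (Der.andE1' (Der.andE2' (der_jTriple X (evalUps X w φ) (evalUps X w ψ))))
  | imp φ ψ ih1 ih2 =>
    refine Der.biimp_trans (Der.biimp_imp_cong ih1 ih2) ?_
    exact Der.biimp_symm (Der.andE2' (Der.andE2' (der_jTriple X (evalUps X w φ) (evalUps X w ψ))))

lemma der_mono {U : Ups X} (r : X) (hr : ∀ x, r ≤ x) (hsub : U.1 ⊆ (jS X r hr).1) :
    Der {jDelta X} ((jP X U).imp (jP X (jS X r hr))) := by
  have hUe : upsInter U (jS X r hr) = U := Subtype.ext (Set.inter_eq_left.mpr hsub)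
  have := Der.andE1' (der_jTriple X U (jS X r hr))
  rw [hUe] at this
  refine Der.impI ?_
  exact Der.andE2' (this.w1.biimp_mp Der.hyp0)

lemma sub_jS {U : Ups X} (r : X) (hr : ∀ x, r ≤ x) {x : X} (hx : x ∉ U.1) :
    U.1 ⊆ (jS X r hr).1 := by
  have hrU : r ∉ U.1 := fun h => hx (U.2 (hr x) h)
  intro y hy
  exact ⟨Set.mem_univ _, fun h => hrU (h ▸ hy)⟩

/-- **The key syntactic Jankov lemma**: if a finite rooted poset `X` refutes some
theorem of an si-logic `M`, then the Jankov formula of `X` belongs to `M`. -/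
lemma jankov_mem_of_refutes {M : Set IForm} (hM : SuperIntuitionistic M)
    (r : X) (hr : ∀ x, r ≤ x) {χ : IForm} (hχ : χ ∈ M) (href : ¬ ValidIn X χ) :
    jankov X r hr ∈ M := by
  simp only [ValidIn, not_forall] at href
  obtain ⟨v, hv, x₀, hx₀⟩ := href
  set w : ℕ → Ups X := fun n => ⟨v n, hv n⟩ with hw
  set σ : ℕ → IForm := fun n => jP X (w n) with hσ
  -- `x₀` is not in the value of `χ`
  have hval : x₀ ∉ (evalUps X w χ).1 := by
    intro h
    exact hx₀ ((forces_evalUps X w χ x₀).mpr h)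
  -- derive `σχ → p_s` from `δ`
  have hds : Der {jDelta X} ((χ.subst σ).imp (jP X (jS X r hr))) := by
    refine Der.impI ?_
    have hmain := (der_main X w χ).w1 (ψ := χ.subst σ)
    have hU : Der (insert (χ.subst σ) {jDelta X}) (jP X (evalUps X w χ)) :=
      hmain.biimp_mp Der.hyp0
    exact Der.mp ((der_mono X r hr (sub_jS X r hr hval)).w1) hU
  -- turn it into an IPC theorem
  have hipc : IPC ((χ.subst σ).imp ((jDelta X).imp (jP X (jS X r hr)))) := by
    apply ipc_swap
    apply der_empty_ipc
    apply Der.impI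
    exact hds.weak (by simp)
  have hsub : χ.subst σ ∈ M := hM.2.2 χ σ hχ
  have := hM.2.1 _ _ (hM.1 _ hipc) hsub
  rwa [jankov_eq]

end Syntactic

/-! ### Assembly lemmas -/

/-- The generating set of `L⁻`. -/
def jGen (L : Set IForm) : Set IForm :=
  {φ | ∃ (X : Type) (i1 : Fintype X) (i2 : PartialOrder X) (r : X)
    (hr : ∀ x : X, i2.le r x),
      ¬(@ValidLogic X i2.toPreorder L) ∧ φ = @jankov X i1 i2 r hr}

lemma LMinus_eq (L : Set IForm) : LMinus L = IPCPlus (jGen L) := rfl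

lemma jGen_subset {L : Set IForm} (hL : SuperIntuitionistic L) : jGen L ⊆ L := by
  rintro φ ⟨X, i1, i2, r, hr, hnv, rfl⟩
  simp only [ValidLogic, not_forall] at hnv
  obtain ⟨χ, hχ, href⟩ := hnv
  exact jankov_mem_of_refutes X hL r hr hχ href

lemma LMinus_subset {L : Set IForm} (hL : SuperIntuitionistic L) : LMinus L ⊆ L :=
  ipcPlus_le hL (jGen_subset hL)

/-- If a finite poset refutes `L`, it refutes `L⁻` too. -/
lemma refutes_LMinus {L : Set IForm} (Y : Type) [Fintype Y] [PartialOrder Y]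
    (hnv : ¬ ValidLogic Y L) : ¬ ValidLogic Y (LMinus L) := by
  simp only [ValidLogic, not_forall] at hnv
  obtain ⟨χ, hχ, href⟩ := hnv
  simp only [ValidIn, not_forall] at href
  obtain ⟨v, hv, x₀, hx₀⟩ := href
  set X : Type := {y : Y // x₀ ≤ y} with hX
  letI i1 : Fintype X := Fintype.ofFinite X
  set r : X := ⟨x₀, le_refl _⟩ with hrdef
  have hr : ∀ u : X, r ≤ u := fun u => u.2
  -- X refutes L
  have hXnv : ¬ ValidLogic X L := by
    intro hvl
    apply hx₀
    have := hvl χ hχ (fun n => Subtype.val ⁻¹' v n)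
      (fun n => preimage_upper x₀ (hv n)) r
    exact (forces_restrict x₀ v χ r).mp this
  -- so 𝒥(X) is a generator of L⁻
  have hgen : jankov X r hr ∈ LMinus L :=
    subset_ipcPlus (jGen L) ⟨X, i1, inferInstance, r, hr, hXnv, rfl⟩
  -- but Y refutes 𝒥(X)
  intro hvl
  have hval : ValidIn Y (jankov X r hr) := hvl _ hgen
  have hrefX : ¬ Forces (jVal X) r (jankov X r hr) := not_forces_jankov X r hr
  have := refute_transfer x₀ (jVal X) (jVal_upper X) (jankov X r hr) r hrefX
  exact this (hval (fun n => Subtype.val '' jVal X n)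
    (fun n => image_upper x₀ (jVal_upper X n)) x₀)

end Aux

/-- **Theorem.** For every si-logic `L`, the logic
`L⁻ = IPC + {𝒥(X) : X a finite rooted poset not validating L}` belongs to the
fmp span of `L`, is axiomatizable by Jankov formulas, and is the only member of
`fmp(L)` that is axiomatizable by Jankov formulas. -/
theorem LMinus_mem_jankovAx_unique (L : Set IForm) (hL : SuperIntuitionistic L) :
    LMinus L ∈ fmpSpan L ∧ JankovAxiomatizable (LMinus L) ∧
      ∀ L' ∈ fmpSpan L, JankovAxiomatizable L' → L' = LMinus L := by
  refine ⟨⟨ipcPlus_si _, ?_⟩, ?_, ?_⟩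
  · -- SameFinPosets L (LMinus L)
    intro Y _ _
    constructor
    · exact fun hY φ hφ => hY φ (LMinus_subset hL hφ)
    · intro hY
      by_contra hnv
      exact refutes_LMinus Y hnv hY
  · -- JankovAxiomatizable
    refine ⟨jGen L, ?_, rfl⟩
    rintro φ ⟨X, i1, i2, r, hr, _, rfl⟩
    exact ⟨X, i1, i2, r, hr, rfl⟩
  · -- uniqueness
    rintro L' ⟨hL', hsame⟩ ⟨Ax, hAx, rfl⟩
    have hAxSub : Ax ⊆ LMinus L := by
      intro φ hφ
      obtain ⟨X, i1, i2, r, hr, rfl⟩ := hAx φ hφ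
      have hrefX : ¬ ValidLogic X (IPCPlus Ax) := by
        intro hvl
        exact not_validIn_jankov X r hr (hvl _ (subset_ipcPlus Ax hφ))
      have hXnv : ¬ ValidLogic X L := fun h => hrefX ((hsame X).mp h)
      exact subset_ipcPlus (jGen L) ⟨X, i1, i2, r, hr, hXnv, rfl⟩
    have hGenSub : jGen L ⊆ IPCPlus Ax := by
      rintro φ ⟨X, i1, i2, r, hr, hXnv, rfl⟩
      have hXnv' : ¬ ValidLogic X (IPCPlus Ax) := fun h => hXnv ((hsame X).mpr h)
      simp only [ValidLogic, not_forall] at hXnv'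
      obtain ⟨χ, hχ, href⟩ := hXnv'
      exact jankov_mem_of_refutes X (ipcPlus_si Ax) r hr hχ href
    exact Set.Subset.antisymm (ipcPlus_le (ipcPlus_si (jGen L)) hAxSub)
      (ipcPlus_le (ipcPlus_si Ax) hGenSub)
end

section
/- Every locally tabular si-logic has degree of fmp equal to 1. -/
/-- `φ` only uses the variables `p₀, …, p_{n-1}`. -/
def UsesVarsLt (n : ℕ) : IForm → Prop
  | .var k => k < n
  | .bot => True
  | .and φ ψ => UsesVarsLt n φ ∧ UsesVarsLt n ψ
  | .or φ ψ => UsesVarsLt n φ ∧ UsesVarsLt n ψ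
  | .imp φ ψ => UsesVarsLt n φ ∧ UsesVarsLt n ψ

/-- An si-logic `L` is locally tabular if for each `n` there are, up to
`L`-provable equivalence, only finitely many formulas in the first `n`
variables. -/
def LocallyTabular (L : Set IForm) : Prop :=
  ∀ n : ℕ, ∃ S : Finset IForm, ∀ φ, UsesVarsLt n φ → ∃ ψ ∈ S, φ.biimp ψ ∈ L

set_option linter.unusedVariables false
section PART1
open IForm

attribute [local instance] Classical.propDecidable

namespace LTdeg

/-- iterated conjunction -/
def lconj : List IForm → IForm
  | [] => IForm.bot.imp IForm.bot
  | x :: l => x.and (lconj l)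

/-- iterated disjunction -/
def ldisj : List IForm → IForm
  | [] => IForm.bot
  | x :: l => x.or (ldisj l)

/-- a bound on the variables of a formula -/
def vbound : IForm → ℕ
  | .var k => k+1
  | .bot => 0
  | .and a b => max (vbound a) (vbound b)
  | .or a b => max (vbound a) (vbound b)
  | .imp a b => max (vbound a) (vbound b)

lemma uses_mono : ∀ (φ : IForm) {m n : ℕ}, m ≤ n → UsesVarsLt m φ → UsesVarsLt n φ
  | .var k, m, n, h, hv => lt_of_lt_of_le hv h
  | .bot, _, _, _, _ => trivial
  | .and a b, m, n, h, hv => ⟨uses_mono a h hv.1, uses_mono b h hv.2⟩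
  | .or a b, m, n, h, hv => ⟨uses_mono a h hv.1, uses_mono b h hv.2⟩
  | .imp a b, m, n, h, hv => ⟨uses_mono a h hv.1, uses_mono b h hv.2⟩

lemma uses_vbound : ∀ φ : IForm, UsesVarsLt (vbound φ) φ
  | .var k => Nat.lt_succ_self k
  | .bot => trivial
  | .and a b => ⟨uses_mono a (le_max_left _ _) (uses_vbound a),
      uses_mono b (le_max_right _ _) (uses_vbound b)⟩
  | .or a b => ⟨uses_mono a (le_max_left _ _) (uses_vbound a),
      uses_mono b (le_max_right _ _) (uses_vbound b)⟩
  | .imp a b => ⟨uses_mono a (le_max_left _ _) (uses_vbound a),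
      uses_mono b (le_max_right _ _) (uses_vbound b)⟩

lemma uses_biimp {n : ℕ} {a b : IForm} (ha : UsesVarsLt n a) (hb : UsesVarsLt n b) :
    UsesVarsLt n (a.biimp b) := ⟨⟨ha, hb⟩, ⟨hb, ha⟩⟩

lemma uses_subst_all {n : ℕ} {σ : ℕ → IForm} (hσ : ∀ i, UsesVarsLt n (σ i)) :
    ∀ φ : IForm, UsesVarsLt n (φ.subst σ)
  | .var k => hσ k
  | .bot => trivial
  | .and a b => ⟨uses_subst_all hσ a, uses_subst_all hσ b⟩
  | .or a b => ⟨uses_subst_all hσ a, uses_subst_all hσ b⟩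
  | .imp a b => ⟨uses_subst_all hσ a, uses_subst_all hσ b⟩

lemma uses_lconj {n : ℕ} : ∀ {l : List IForm}, (∀ x ∈ l, UsesVarsLt n x) → UsesVarsLt n (lconj l)
  | [], _ => ⟨trivial, trivial⟩
  | x :: l, h => ⟨h x (List.mem_cons_self), uses_lconj (fun y hy => h y (List.mem_cons_of_mem _ hy))⟩

lemma uses_ldisj {n : ℕ} : ∀ {l : List IForm}, (∀ x ∈ l, UsesVarsLt n x) → UsesVarsLt n (ldisj l)
  | [], _ => trivial
  | x :: l, h => ⟨h x (List.mem_cons_self), uses_ldisj (fun y hy => h y (List.mem_cons_of_mem _ hy))⟩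

/-! ### Hilbert-style derivations from a set of hypotheses -/

inductive Prf (Γ : Set IForm) : IForm → Prop
  | hyp {φ : IForm} : φ ∈ Γ → Prf Γ φ
  | ax {φ : IForm} : IPC φ → Prf Γ φ
  | mp {φ ψ : IForm} : Prf Γ (φ.imp ψ) → Prf Γ φ → Prf Γ ψ

namespace Prf

lemma mono {Γ Δ : Set IForm} {φ : IForm} (h : Prf Γ φ) (hΓΔ : Γ ⊆ Δ) : Prf Δ φ := by
  induction h with
  | hyp h => exact hyp (hΓΔ h)
  | ax h => exact ax h
  | mp _ _ ih1 ih2 => exact mp ih1 ih2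

lemma wk {Γ : Set IForm} {φ a : IForm} (h : Prf Γ φ) : Prf (insert a Γ) φ :=
  h.mono (Set.subset_insert _ _)

lemma selfimp (Γ : Set IForm) (a : IForm) : Prf Γ (a.imp a) :=
  mp (mp (ax (IPC.ax2 a (a.imp a) a)) (ax (IPC.ax1 a (a.imp a)))) (ax (IPC.ax1 a a))

lemma ded {Γ : Set IForm} {a b : IForm} (h : Prf (insert a Γ) b) : Prf Γ (a.imp b) := by
  induction h with
  | @hyp φ h =>
    rcases h with h | h
    · exact h ▸ selfimp _ _
    · exact mp (ax (IPC.ax1 φ a)) (hyp h)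
  | @ax φ h => exact mp (ax (IPC.ax1 φ a)) (ax h)
  | @mp φ ψ _ _ ih1 ih2 => exact mp (mp (ax (IPC.ax2 a φ ψ)) ih1) ih2

lemma ded_rev {Γ : Set IForm} {a b : IForm} (h : Prf Γ (a.imp b)) : Prf (insert a Γ) b :=
  mp h.wk (hyp (Set.mem_insert _ _))

/-- compactness: every derivation uses finitely many hypotheses -/
lemma finite_support {Γ : Set IForm} {φ : IForm} (h : Prf Γ φ) :
    ∃ Δ : Finset IForm, ↑Δ ⊆ Γ ∧ Prf (↑Δ) φ := by
  induction h with
  | @hyp ψ h => exact ⟨{ψ}, by simpa using h, hyp (by simp)⟩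
  | ax h => exact ⟨∅, by simp, ax h⟩
  | @mp φ ψ _ _ ih1 ih2 =>
    obtain ⟨Δ₁, hΔ₁, h1⟩ := ih1
    obtain ⟨Δ₂, hΔ₂, h2⟩ := ih2
    refine ⟨Δ₁ ∪ Δ₂, ?_, mp (h1.mono ?_) (h2.mono ?_)⟩
    · intro x hx; rcases Finset.mem_union.mp (by exact_mod_cast hx) with h | h
      exacts [hΔ₁ h, hΔ₂ h]
    · intro x hx; exact_mod_cast Finset.mem_union_left _ (by exact_mod_cast hx)
    · intro x hx; exact_mod_cast Finset.mem_union_right _ (by exact_mod_cast hx)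

lemma cut {Γ : Set IForm} {a b : IForm} (h : Prf (insert a Γ) b) (ha : Prf Γ a) : Prf Γ b :=
  mp (ded h) ha

/-! propositional toolkit -/

lemma andI' {Γ : Set IForm} {a b : IForm} (ha : Prf Γ a) (hb : Prf Γ b) : Prf Γ (a.and b) :=
  mp (mp (ax (IPC.andI a b)) ha) hb

lemma andE1' {Γ : Set IForm} {a b : IForm} (h : Prf Γ (a.and b)) : Prf Γ a := mp (ax (IPC.andE1 a b)) h
lemma andE2' {Γ : Set IForm} {a b : IForm} (h : Prf Γ (a.and b)) : Prf Γ b := mp (ax (IPC.andE2 a b)) h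
lemma orI1' {Γ : Set IForm} {a : IForm} (b : IForm) (h : Prf Γ a) : Prf Γ (a.or b) := mp (ax (IPC.orI1 a b)) h
lemma orI2' {Γ : Set IForm} (a : IForm) {b : IForm} (h : Prf Γ b) : Prf Γ (a.or b) := mp (ax (IPC.orI2 a b)) h

lemma orE' {Γ : Set IForm} {a b c : IForm} (h : Prf Γ (a.or b)) (h1 : Prf (insert a Γ) c)
    (h2 : Prf (insert b Γ) c) : Prf Γ c :=
  mp (mp (mp (ax (IPC.orE a b c)) (ded h1)) (ded h2)) h

lemma efq' {Γ : Set IForm} (c) (h : Prf Γ IForm.bot) : Prf Γ c := mp (ax (IPC.exfalso c)) h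

lemma imp_trans {Γ : Set IForm} {a b c : IForm} (h1 : Prf Γ (a.imp b)) (h2 : Prf Γ (b.imp c)) :
    Prf Γ (a.imp c) :=
  ded (mp h2.wk (mp h1.wk (hyp (Set.mem_insert _ _))))

lemma biimpI {Γ : Set IForm} {a b : IForm} (h1 : Prf Γ (a.imp b)) (h2 : Prf Γ (b.imp a)) :
    Prf Γ (a.biimp b) := andI' h1 h2

lemma biimpE1 {Γ : Set IForm} {a b : IForm} (h : Prf Γ (a.biimp b)) : Prf Γ (a.imp b) := andE1' h
lemma biimpE2 {Γ : Set IForm} {a b : IForm} (h : Prf Γ (a.biimp b)) : Prf Γ (b.imp a) := andE2' h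

lemma biimp_refl (Γ : Set IForm) (a : IForm) : Prf Γ (a.biimp a) := biimpI (selfimp _ _) (selfimp _ _)

lemma biimp_symm {Γ : Set IForm} {a b : IForm} (h : Prf Γ (a.biimp b)) : Prf Γ (b.biimp a) :=
  biimpI (biimpE2 h) (biimpE1 h)

lemma biimp_trans {Γ : Set IForm} {a b c : IForm} (h1 : Prf Γ (a.biimp b)) (h2 : Prf Γ (b.biimp c)) :
    Prf Γ (a.biimp c) :=
  biimpI (imp_trans (biimpE1 h1) (biimpE1 h2)) (imp_trans (biimpE2 h2) (biimpE2 h1))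

lemma biimp_mp {Γ : Set IForm} {a b : IForm} (h : Prf Γ (a.biimp b)) (ha : Prf Γ a) : Prf Γ b :=
  mp (biimpE1 h) ha

lemma cong_and {Γ : Set IForm} {a a' b b' : IForm} (ha : Prf Γ (a.biimp a')) (hb : Prf Γ (b.biimp b')) :
    Prf Γ ((a.and b).biimp (a'.and b')) := by
  have key : ∀ {x x' y y' : IForm}, Prf Γ (x.imp x') → Prf Γ (y.imp y') →
      Prf Γ ((x.and y).imp (x'.and y')) := by
    intro x x' y y' h1 h2
    refine ded (andI' ?_ ?_)
    · exact mp h1.wk (andE1' (hyp (Set.mem_insert _ _)))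
    · exact mp h2.wk (andE2' (hyp (Set.mem_insert _ _)))
  exact biimpI (key (biimpE1 ha) (biimpE1 hb)) (key (biimpE2 ha) (biimpE2 hb))

lemma cong_or {Γ : Set IForm} {a a' b b' : IForm} (ha : Prf Γ (a.biimp a')) (hb : Prf Γ (b.biimp b')) :
    Prf Γ ((a.or b).biimp (a'.or b')) := by
  have key : ∀ {x x' y y' : IForm}, Prf Γ (x.imp x') → Prf Γ (y.imp y') →
      Prf Γ ((x.or y).imp (x'.or y')) := by
    intro x x' y y' h1 h2
    refine ded (orE' (hyp (Set.mem_insert _ _)) ?_ ?_)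
    · exact orI1' _ (mp (h1.wk.wk) (hyp (Set.mem_insert _ _)))
    · exact orI2' _ (mp (h2.wk.wk) (hyp (Set.mem_insert _ _)))
  exact biimpI (key (biimpE1 ha) (biimpE1 hb)) (key (biimpE2 ha) (biimpE2 hb))

lemma cong_imp {Γ : Set IForm} {a a' b b' : IForm} (ha : Prf Γ (a.biimp a')) (hb : Prf Γ (b.biimp b')) :
    Prf Γ ((a.imp b).biimp (a'.imp b')) := by
  have key : ∀ {x x' y y' : IForm}, Prf Γ (x'.imp x) → Prf Γ (y.imp y') →
      Prf Γ ((x.imp y).imp (x'.imp y')) := by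
    intro x x' y y' h1 h2
    refine ded (ded ?_)
    have hx' : Prf (insert x' (insert (x.imp y) Γ)) x' := hyp (Set.mem_insert _ _)
    have hxy : Prf (insert x' (insert (x.imp y) Γ)) (x.imp y) :=
      hyp (Set.mem_insert_of_mem _ (Set.mem_insert _ _))
    exact mp h2.wk.wk (mp hxy (mp h1.wk.wk hx'))
  exact biimpI (key (biimpE2 ha) (biimpE1 hb)) (key (biimpE1 ha) (biimpE2 hb))

lemma lconj_intro {Γ : Set IForm} : ∀ {l : List IForm}, (∀ x ∈ l, Prf Γ x) → Prf Γ (lconj l)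
  | [], _ => selfimp _ _
  | x :: l, h => andI' (h x (List.mem_cons_self))
      (lconj_intro (fun y hy => h y (List.mem_cons_of_mem _ hy)))

lemma lconj_elim {Γ : Set IForm} : ∀ {l : List IForm} {x : IForm}, Prf Γ (lconj l) → x ∈ l → Prf Γ x
  | [], x, _, hx => absurd hx List.not_mem_nil
  | y :: l, x, h, hx => by
    rcases List.mem_cons.mp hx with h' | h'
    · subst h'; exact andE1' h
    · exact lconj_elim (andE2' h) h'

lemma ldisj_intro {Γ : Set IForm} : ∀ {l : List IForm} {x : IForm}, x ∈ l → Prf Γ x → Prf Γ (ldisj l)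
  | [], x, hx, _ => absurd hx List.not_mem_nil
  | y :: l, x, hx, h => by
    rcases List.mem_cons.mp hx with h' | h'
    · subst h'; exact orI1' _ h
    · exact orI2' _ (ldisj_intro h' h)

lemma ldisj_elim {Γ : Set IForm} {c : IForm} : ∀ {l : List IForm}, Prf Γ (ldisj l) →
    (∀ x ∈ l, Prf (insert x Γ) c) → Prf Γ c
  | [], h, _ => efq' _ h
  | y :: l, h, hs => by
    refine orE' h (hs y (List.mem_cons_self)) ?_
    have : Prf (insert (ldisj l) Γ) (ldisj l) := hyp (Set.mem_insert _ _)
    refine ldisj_elim this ?_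
    intro x hx
    have h' := (hs x (List.mem_cons_of_mem _ hx))
    refine h'.mono ?_
    intro z hz
    rcases hz with hz | hz
    · exact hz ▸ Set.mem_insert _ _
    · exact Set.mem_insert_of_mem _ (Set.mem_insert_of_mem _ hz)

end Prf

/-- membership in a superintuitionistic logic via derivations with hypotheses in the logic -/
lemma logic_of_prf {L : Set IForm} (hL : SuperIntuitionistic L) {φ : IForm} (h : Prf L φ) : φ ∈ L := by
  induction h with
  | hyp h => exact h
  | ax h => exact hL.1 _ h
  | mp _ _ ih1 ih2 => exact hL.2.1 _ _ ih1 ih2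

end LTdeg
end PART1

section PART2
open IForm
namespace LTdeg
open Prf

/-- A prime theory of the logic `M` in the variables `p₀,…,p_{n-1}`. -/
structure IsPT (M : Set IForm) (n : ℕ) (T : Set IForm) : Prop where
  bdd : ∀ χ ∈ T, UsesVarsLt n χ
  closed : ∀ χ, UsesVarsLt n χ → Prf (M ∪ T) χ → χ ∈ T
  proper : IForm.bot ∉ T
  prime : ∀ a b : IForm, a.or b ∈ T → a ∈ T ∨ b ∈ T

namespace IsPT

variable {M : Set IForm} {n : ℕ} {T : Set IForm}

lemma prf_of_mem (hT : IsPT M n T) {χ : IForm} (h : χ ∈ T) : Prf (M ∪ T) χ :=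
  Prf.hyp (Or.inr h)

lemma mem_of_logic (hT : IsPT M n T) {χ : IForm} (h : χ ∈ M) (hb : UsesVarsLt n χ) : χ ∈ T :=
  hT.closed χ hb (Prf.hyp (Or.inl h))

lemma mem_mp (hT : IsPT M n T) {a b : IForm} (h : a.imp b ∈ T) (ha : a ∈ T) : b ∈ T :=
  hT.closed b (hT.bdd _ h).2 (Prf.mp (hT.prf_of_mem h) (hT.prf_of_mem ha))

lemma mem_biimp_mp (hT : IsPT M n T) {a b : IForm} (h : a.biimp b ∈ T) (ha : a ∈ T) : b ∈ T :=
  hT.mem_mp (hT.closed _ (hT.bdd _ h).1 (biimpE1 (hT.prf_of_mem h))) ha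


lemma mem_biimp_trans (hT : IsPT M n T) {a b c : IForm} (h1 : a.biimp b ∈ T) (h2 : b.biimp c ∈ T) :
    a.biimp c ∈ T :=
  hT.closed _ (uses_biimp (hT.bdd _ h1).1.1 (hT.bdd _ h2).1.2)
    (biimp_trans (hT.prf_of_mem h1) (hT.prf_of_mem h2))

lemma mem_biimp_symm (hT : IsPT M n T) {a b : IForm} (h : a.biimp b ∈ T) : b.biimp a ∈ T :=
  hT.closed _ (uses_biimp (hT.bdd _ h).1.2 (hT.bdd _ h).1.1) (biimp_symm (hT.prf_of_mem h))

lemma mem_biimp_mpr (hT : IsPT M n T) {a b : IForm} (h : a.biimp b ∈ T) (hb : b ∈ T) : a ∈ T :=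
  hT.mem_biimp_mp (hT.mem_biimp_symm h) hb

lemma mem_lconj_iff (hT : IsPT M n T) {l : List IForm} (hb : ∀ x ∈ l, UsesVarsLt n x) :
    lconj l ∈ T ↔ ∀ x ∈ l, x ∈ T := by
  constructor
  · intro h x hx
    exact hT.closed x (hb x hx) (lconj_elim (hT.prf_of_mem h) hx)
  · intro h
    exact hT.closed _ (uses_lconj hb) (lconj_intro fun x hx => hT.prf_of_mem (h x hx))

lemma mem_ldisj_iff (hT : IsPT M n T) {l : List IForm} (hb : ∀ x ∈ l, UsesVarsLt n x) :
    ldisj l ∈ T ↔ ∃ x ∈ l, x ∈ T := by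
  constructor
  · intro h
    induction l with
    | nil => exact absurd h hT.proper
    | cons y l ih =>
      rcases hT.prime _ _ h with h' | h'
      · exact ⟨y, List.mem_cons_self, h'⟩
      · obtain ⟨x, hx, hxT⟩ := ih (fun x hx => hb x (List.mem_cons_of_mem _ hx)) h'
        exact ⟨x, List.mem_cons_of_mem _ hx, hxT⟩
  · rintro ⟨x, hx, hxT⟩
    exact hT.closed _ (uses_ldisj hb) (ldisj_intro hx (hT.prf_of_mem hxT))

end IsPT

lemma finset_subset_chain {c : Set (Set IForm)} (hc : IsChain (· ⊆ ·) c) (hne : c.Nonempty)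
    (Δ : Finset IForm) (h : ↑Δ ⊆ ⋃₀ c) : ∃ S ∈ c, ↑Δ ⊆ S := by
  classical
  induction Δ using Finset.induction with
  | empty => exact ⟨hne.choose, hne.choose_spec, by simp⟩
  | @insert a Δ ha ih =>
    obtain ⟨S₁, hS₁c, hS₁⟩ := ih (by
      intro x hx
      exact h (by exact_mod_cast Finset.mem_insert_of_mem (by exact_mod_cast hx)))
    obtain ⟨S₂, hS₂c, haS₂⟩ : ∃ S ∈ c, a ∈ S := by
      have := h (by exact_mod_cast Finset.mem_insert_self a Δ)
      simpa [Set.mem_sUnion] using this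
    rcases hc.total hS₁c hS₂c with hle | hle
    · refine ⟨S₂, hS₂c, ?_⟩
      intro x hx
      rcases Finset.mem_insert.mp (by exact_mod_cast hx) with rfl | hx'
      · exact haS₂
      · exact hle (hS₁ (by exact_mod_cast hx'))
    · refine ⟨S₁, hS₁c, ?_⟩
      intro x hx
      rcases Finset.mem_insert.mp (by exact_mod_cast hx) with rfl | hx'
      · exact hle haS₂
      · exact hS₁ (by exact_mod_cast hx')

/-- Lindenbaum-style prime extension lemma, with a maximality clause. -/
lemma prime_ext (M : Set IForm) (n : ℕ) (T₀ : Set IForm) (hb : ∀ χ ∈ T₀, UsesVarsLt n χ)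
    (γ : IForm) (hγ : UsesVarsLt n γ) (h : ¬ Prf (M ∪ T₀) γ) :
    ∃ T, IsPT M n T ∧ T₀ ⊆ T ∧ γ ∉ T ∧
      (∀ T', IsPT M n T' → T ⊆ T' → T ≠ T' → γ ∈ T') := by
  classical
  set 𝒮 : Set (Set IForm) :=
    {S | T₀ ⊆ S ∧ (∀ χ ∈ S, UsesVarsLt n χ) ∧ ¬ Prf (M ∪ S) γ} with h𝒮
  have hub : ∀ c ⊆ 𝒮, IsChain (· ⊆ ·) c → c.Nonempty → ∃ ub ∈ 𝒮, ∀ s ∈ c, s ⊆ ub := by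
    intro c hc hchain hcne
    refine ⟨⋃₀ c, ⟨?_, ?_, ?_⟩, fun s hs => Set.subset_sUnion_of_mem hs⟩
    · obtain ⟨S, hS⟩ := hcne
      exact (hc hS).1.trans (Set.subset_sUnion_of_mem hS)
    · intro χ hχm
      obtain ⟨S, hS, hχ⟩ := Set.mem_sUnion.mp hχm
      exact (hc hS).2.1 χ hχ
    · intro hPrf
      obtain ⟨Δ, hΔ, hd⟩ := hPrf.finite_support
      have hsplit : ∀ x ∈ Δ, x ∈ M ∪ ⋃₀ c := fun x hx => hΔ hx
      -- split Δ into the M-part and the union part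
      set Δc := Δ.filter (fun x => x ∈ ⋃₀ c ∧ x ∉ M) with hΔc
      obtain ⟨S, hSc, hΔcS⟩ := finset_subset_chain hchain hcne Δc (by
        intro x hx
        have := Finset.mem_filter.mp (by exact_mod_cast hx)
        exact this.2.1)
      refine (hc hSc).2.2 (hd.mono ?_)
      intro x hx
      have hxΔ : x ∈ Δ := hx
      rcases hsplit x hxΔ with hM | hU
      · exact Or.inl hM
      · by_cases hMx : x ∈ M
        · exact Or.inl hMx
        · have hxf : x ∈ Δc := Finset.mem_filter.mpr ⟨hxΔ, ⟨hU, hMx⟩⟩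
          exact Or.inr (hΔcS (Finset.mem_coe.mpr hxf))
  have hT₀ : T₀ ∈ 𝒮 := ⟨subset_rfl, hb, h⟩
  obtain ⟨T, hsub, hTmax⟩ := zorn_subset_nonempty 𝒮 hub T₀ hT₀
  obtain ⟨⟨hT₀T, hTb, hTnp⟩, hmax⟩ := hTmax
  -- maximality in convenient form
  have hmax' : ∀ S ∈ 𝒮, T ⊆ S → S = T := fun S hS hTS => subset_antisymm (hmax hS hTS) hTS
  have hclosed : ∀ χ, UsesVarsLt n χ → Prf (M ∪ T) χ → χ ∈ T := by
    intro χ hχb hχd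
    by_contra hχT
    have hmem : insert χ T ∈ 𝒮 := by
      refine ⟨hT₀T.trans (Set.subset_insert _ _), ?_, ?_⟩
      · intro x hx
        rcases hx with rfl | hx
        · exact hχb
        · exact hTb x hx
      · intro hPrf
        have : Prf (M ∪ T) (χ.imp γ) := by
          refine Prf.ded (hPrf.mono ?_)
          rw [Set.union_insert]
        exact hTnp (Prf.mp this hχd)
    have := hmax' _ hmem (Set.subset_insert _ _)
    exact hχT (this ▸ Set.mem_insert _ _)
  have hTpt : IsPT M n T := by
    refine ⟨hTb, hclosed, ?_, ?_⟩
    · intro hbot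
      exact hTnp (Prf.efq' _ (Prf.hyp (Or.inr hbot)))
    · intro a b hab
      by_contra hcon
      push_neg at hcon
      obtain ⟨haT, hbT⟩ := hcon
      have hause : UsesVarsLt n a := (hTb _ hab).1
      have hbuse : UsesVarsLt n b := (hTb _ hab).2
      have hda : Prf (M ∪ T) γ → False := hTnp
      -- both a and b would derive γ over T
      have hka : Prf (M ∪ insert a T) γ := by
        by_contra hk
        have : insert a T ∈ 𝒮 := ⟨hT₀T.trans (Set.subset_insert _ _),
          (fun x hx => by rcases hx with rfl | hx; exacts [hause, hTb x hx]), hk⟩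
        exact haT ((hmax' _ this (Set.subset_insert _ _)) ▸ Set.mem_insert _ _)
      have hkb : Prf (M ∪ insert b T) γ := by
        by_contra hk
        have : insert b T ∈ 𝒮 := ⟨hT₀T.trans (Set.subset_insert _ _),
          (fun x hx => by rcases hx with rfl | hx; exacts [hbuse, hTb x hx]), hk⟩
        exact hbT ((hmax' _ this (Set.subset_insert _ _)) ▸ Set.mem_insert _ _)
      refine hTnp (Prf.orE' (Prf.hyp (Or.inr hab)) ?_ ?_)
      · exact hka.mono (by rw [Set.union_insert])
      · exact hkb.mono (by rw [Set.union_insert])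
  have hγT : γ ∉ T := fun hγT => hTnp (Prf.hyp (Or.inr hγT))
  refine ⟨T, hTpt, hT₀T, hγT, ?_⟩
  intro T' hT' hTT' hne
  by_contra hγT'
  have : T' ∈ 𝒮 := ⟨hT₀T.trans hTT', hT'.bdd, ?_⟩
  · exact hne ((hmax' _ this hTT').symm)
  · intro hPrf
    exact hγT' (hT'.closed _ hγ hPrf)
end LTdeg
end PART2

section PART3
open IForm
namespace LTdeg
open Prf
attribute [local instance] Classical.propDecidable

variable {M : Set IForm} {n : ℕ} {T : Set IForm}

/-- the points of the finite frame associated to a prime theory `T`: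
all prime `M`-theories extending `T`. -/
def Pt (M : Set IForm) (n : ℕ) (T : Set IForm) (G : Set IForm) : Prop :=
  IsPT M n G ∧ T ⊆ G

abbrev Point (M : Set IForm) (n : ℕ) (T : Set IForm) : Type := {G : Set IForm // Pt M n T G}

lemma point_le_iff {G G' : Point M n T} : G ≤ G' ↔ G.1 ⊆ G'.1 := Iff.rfl

/-- classical filter of a list by a proposition -/
noncomputable def filterP (p : α → Prop) (l : List α) : List α :=
  l.filter (fun a => decide (p a) : α → Bool)

lemma mem_filterP {p : α → Prop} {l : List α} {x : α} :
    x ∈ filterP p l ↔ x ∈ l ∧ p x := by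
  simp [filterP, List.mem_filter, decide_eq_true_eq]

section WithReps

variable {S₀ : List IForm}

lemma point_finite (hS₀ : ∀ χ, UsesVarsLt n χ → ∃ s ∈ S₀, χ.biimp s ∈ T) :
    Finite (Point M n T) := by
  classical
  have key : ∀ A B : Point M n T,
      (∀ i : Fin S₀.length, (S₀.get i ∈ A.1) = (S₀.get i ∈ B.1)) → A.1 ⊆ B.1 := by
    intro A B hAB χ hχ
    obtain ⟨s, hsS, hbi⟩ := hS₀ χ (A.2.1.bdd _ hχ)
    obtain ⟨i, hi⟩ := List.mem_iff_get.mp hsS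
    have hsA : s ∈ A.1 := A.2.1.mem_biimp_mp (A.2.2 hbi) hχ
    have hsB : s ∈ B.1 := by rw [← hi]; rw [← hi] at hsA; rw [← hAB i]; exact hsA
    exact B.2.1.mem_biimp_mpr (B.2.2 hbi) hsB
  refine Finite.of_injective
    (fun G : Point M n T => (fun i : Fin S₀.length => S₀.get i ∈ G.1 : Fin S₀.length → Prop)) ?_
  intro A B hAB
  have h1 := congrFun hAB
  exact Subtype.ext (Set.Subset.antisymm (key A B h1) (key B A (fun i => (h1 i).symm)))

/-- conjunction describing the `S₀`-trace of a point -/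
noncomputable def delta (S₀ : List IForm) (G : Point M n T) : IForm :=
  lconj (filterP (· ∈ G.1) S₀)

/-- the formula defining an upset of the frame of points -/
noncomputable def chiU (S₀ : List IForm) (lp : List (Point M n T))
    (U : Set (Point M n T)) : IForm :=
  ldisj ((filterP (· ∈ U) lp).map (delta S₀))

lemma delta_bdd (hS₀b : ∀ s ∈ S₀, UsesVarsLt n s) (G : Point M n T) : UsesVarsLt n (delta S₀ G) :=
  uses_lconj (fun x hx => hS₀b x (mem_filterP.mp hx).1)

lemma chiU_bdd (hS₀b : ∀ s ∈ S₀, UsesVarsLt n s) (lp : List (Point M n T)) (U : Set (Point M n T)) :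
    UsesVarsLt n (chiU S₀ lp U) := by
  refine uses_ldisj ?_
  intro x hx
  obtain ⟨G, _, rfl⟩ := List.mem_map.mp hx
  exact delta_bdd hS₀b G

lemma delta_mem_iff (hS₀b : ∀ s ∈ S₀, UsesVarsLt n s)
    (hS₀ : ∀ χ, UsesVarsLt n χ → ∃ s ∈ S₀, χ.biimp s ∈ T) (G G' : Point M n T) : delta S₀ G ∈ G'.1 ↔ G.1 ⊆ G'.1 := by
  constructor
  · intro h χ hχ
    obtain ⟨s, hsS, hbi⟩ := hS₀ χ (G.2.1.bdd _ hχ)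
    have hsG : s ∈ G.1 := G.2.1.mem_biimp_mp (G.2.2 hbi) hχ
    have hsf : s ∈ filterP (· ∈ G.1) S₀ := mem_filterP.mpr ⟨hsS, hsG⟩
    have hsG' : s ∈ G'.1 :=
      (G'.2.1.mem_lconj_iff (fun x hx => hS₀b x (mem_filterP.mp hx).1)).mp h s hsf
    exact G'.2.1.mem_biimp_mpr (G'.2.2 hbi) hsG'
  · intro h
    refine (G'.2.1.mem_lconj_iff (fun x hx => hS₀b x (mem_filterP.mp hx).1)).mpr ?_
    intro x hx
    exact h (mem_filterP.mp hx).2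

lemma chiU_mem_iff (hS₀b : ∀ s ∈ S₀, UsesVarsLt n s)
    (hS₀ : ∀ χ, UsesVarsLt n χ → ∃ s ∈ S₀, χ.biimp s ∈ T)
    (lp : List (Point M n T)) (hlp : ∀ G, G ∈ lp)
    {U : Set (Point M n T)} (hU : IsUpperSet U) (G : Point M n T) :
    chiU S₀ lp U ∈ G.1 ↔ G ∈ U := by
  have hbds : ∀ x ∈ (filterP (· ∈ U) lp).map (delta S₀), UsesVarsLt n x := by
    intro x hx
    obtain ⟨G₀, _, rfl⟩ := List.mem_map.mp hx
    exact delta_bdd hS₀b G₀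
  constructor
  · intro h
    obtain ⟨x, hxl, hxG⟩ := (G.2.1.mem_ldisj_iff hbds).mp h
    obtain ⟨G₀, hG₀, rfl⟩ := List.mem_map.mp hxl
    have hG₀U : G₀ ∈ U := (mem_filterP.mp hG₀).2
    have hsub : G₀.1 ⊆ G.1 := (delta_mem_iff hS₀b hS₀ G₀ G).mp hxG
    exact hU (point_le_iff.mpr hsub) hG₀U
  · intro h
    refine (G.2.1.mem_ldisj_iff hbds).mpr ⟨delta S₀ G, ?_, ?_⟩
    · exact List.mem_map.mpr ⟨G, mem_filterP.mpr ⟨hlp G, h⟩, rfl⟩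
    · exact (delta_mem_iff hS₀b hS₀ G G).mpr subset_rfl

lemma mem_and_iff {G₁ : Set IForm} (hG : IsPT M n G₁) {a b : IForm} (ha : UsesVarsLt n a) (hb : UsesVarsLt n b) :
    a.and b ∈ G₁ ↔ a ∈ G₁ ∧ b ∈ G₁ := by
  constructor
  · intro h
    exact ⟨hG.closed _ ha (andE1' (hG.prf_of_mem h)), hG.closed _ hb (andE2' (hG.prf_of_mem h))⟩
  · rintro ⟨h1, h2⟩
    exact hG.closed _ ⟨ha, hb⟩ (andI' (hG.prf_of_mem h1) (hG.prf_of_mem h2))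

lemma mem_or_iff {G₁ : Set IForm} (hG : IsPT M n G₁) {a b : IForm} (ha : UsesVarsLt n a) (hb : UsesVarsLt n b) :
    a.or b ∈ G₁ ↔ a ∈ G₁ ∨ b ∈ G₁ := by
  constructor
  · exact hG.prime a b
  · rintro (h | h)
    · exact hG.closed _ ⟨ha, hb⟩ (orI1' _ (hG.prf_of_mem h))
    · exact hG.closed _ ⟨ha, hb⟩ (orI2' _ (hG.prf_of_mem h))

/-- The transfer ("truth") lemma for the finite frame of points. -/
lemma transfer (hS₀b : ∀ s ∈ S₀, UsesVarsLt n s)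
    (hS₀ : ∀ χ, UsesVarsLt n χ → ∃ s ∈ S₀, χ.biimp s ∈ T)
    (lp : List (Point M n T)) (hlp : ∀ G, G ∈ lp)
    (w : ℕ → Set (Point M n T)) (hw : ∀ i, IsUpperSet (w i)) :
    ∀ (ζ : IForm) (G : Point M n T),
      Forces w G ζ ↔ ζ.subst (fun i => chiU S₀ lp (w i)) ∈ G.1 := by
  set σf : ℕ → IForm := fun i => chiU S₀ lp (w i) with hσf
  have hσb : ∀ i, UsesVarsLt n (σf i) := fun i => chiU_bdd hS₀b lp (w i)
  intro ζ
  induction ζ with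
  | var i =>
    intro G
    show G ∈ w i ↔ _
    simp only [IForm.subst]
    exact (chiU_mem_iff hS₀b hS₀ lp hlp (hw i) G).symm
  | bot =>
    intro G
    show False ↔ _
    simp only [IForm.subst]
    exact ⟨False.elim, fun h => G.2.1.proper h⟩
  | and a b iha ihb =>
    intro G
    show (Forces w G a ∧ Forces w G b) ↔ _
    simp only [IForm.subst]
    rw [iha G, ihb G,
      mem_and_iff G.2.1 (uses_subst_all hσb a) (uses_subst_all hσb b)]
  | or a b iha ihb =>
    intro G
    show (Forces w G a ∨ Forces w G b) ↔ _
    simp only [IForm.subst]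
    rw [iha G, ihb G,
      mem_or_iff G.2.1 (uses_subst_all hσb a) (uses_subst_all hσb b)]
  | imp a b iha ihb =>
    intro G
    show (∀ G', G ≤ G' → Forces w G' a → Forces w G' b) ↔ _
    simp only [IForm.subst]
    constructor
    · intro h
      by_contra hni
      have hnp : ¬ Prf (M ∪ insert (a.subst σf) G.1) (b.subst σf) := by
        intro hp
        refine hni (G.2.1.closed _ ⟨uses_subst_all hσb a, uses_subst_all hσb b⟩ ?_)
        exact Prf.ded (hp.mono (by rw [Set.union_insert]))
      obtain ⟨T', hT', hsub, hbT', -⟩ := prime_ext M n (insert (a.subst σf) G.1)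
        (by
          intro x hx
          rcases hx with rfl | hx
          · exact uses_subst_all hσb a
          · exact G.2.1.bdd x hx)
        (b.subst σf) (uses_subst_all hσb b) hnp
      set G' : Point M n T := ⟨T', hT', G.2.2.trans ((Set.subset_insert _ _).trans hsub)⟩
      have hle : G ≤ G' := (Set.subset_insert _ _).trans hsub
      have hfa : Forces w G' a := (iha G').mpr (hsub (Set.mem_insert _ _))
      exact hbT' ((ihb G').mp (h G' hle hfa))
    · intro h G' hle hfa
      have himp : (a.subst σf).imp (b.subst σf) ∈ G'.1 := hle h
      exact (ihb G').mpr (G'.2.1.mem_mp himp ((iha G').mp hfa))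

/-- separation: formulas co-forced at every point are `T`-equivalent. -/
lemma sep {a b : IForm} (ha : UsesVarsLt n a) (hb : UsesVarsLt n b) (hT : IsPT M n T)
    (h : ∀ G : Point M n T, a ∈ G.1 ↔ b ∈ G.1) : a.biimp b ∈ T := by
  have key : ∀ a b : IForm, UsesVarsLt n a → UsesVarsLt n b →
      (∀ G : Point M n T, a ∈ G.1 → b ∈ G.1) → a.imp b ∈ T := by
    intro a b ha hb hab
    by_contra hni
    have hnp : ¬ Prf (M ∪ insert a T) b := by
      intro hp
      exact hni (hT.closed _ ⟨ha, hb⟩ (Prf.ded (hp.mono (by rw [Set.union_insert]))))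
    obtain ⟨T', hT', hsub, hbT', -⟩ := prime_ext M n (insert a T)
      (by
        intro x hx
        rcases hx with rfl | hx
        · exact ha
        · exact hT.bdd x hx) b hb hnp
    exact hbT' (hab ⟨T', hT', (Set.subset_insert _ _).trans hsub⟩ (hsub (Set.mem_insert _ _)))
  exact hT.closed _ (uses_biimp ha hb)
    (andI' (hT.prf_of_mem (key a b ha hb (fun G => (h G).mp)))
      (hT.prf_of_mem (key b a hb ha (fun G => (h G).mpr))))

end WithReps

lemma biimp_subst (hT : IsPT M n T) (σ : ℕ → IForm) (hσb : ∀ i, UsesVarsLt n (σ i))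
    (hσ : ∀ i, i < n → (IForm.var i).biimp (σ i) ∈ T) :
    ∀ ζ : IForm, UsesVarsLt n ζ → ζ.biimp (ζ.subst σ) ∈ T := by
  intro ζ hζ
  induction ζ with
  | var i => exact hσ i hζ
  | bot => exact hT.closed _ (uses_biimp trivial trivial) (biimp_refl _ _)
  | and a b iha ihb =>
    refine hT.closed _ (uses_biimp hζ ⟨uses_subst_all hσb a, uses_subst_all hσb b⟩) ?_
    exact cong_and (hT.prf_of_mem (iha hζ.1)) (hT.prf_of_mem (ihb hζ.2))
  | or a b iha ihb =>
    refine hT.closed _ (uses_biimp hζ ⟨uses_subst_all hσb a, uses_subst_all hσb b⟩) ?_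
    exact cong_or (hT.prf_of_mem (iha hζ.1)) (hT.prf_of_mem (ihb hζ.2))
  | imp a b iha ihb =>
    refine hT.closed _ (uses_biimp hζ ⟨uses_subst_all hσb a, uses_subst_all hσb b⟩) ?_
    exact cong_imp (hT.prf_of_mem (iha hζ.1)) (hT.prf_of_mem (ihb hζ.2))

/-- **Core lemma.** If `T` is a prime `M₁`-theory whose Lindenbaum quotient in the
first `n` variables is finite, and `M₂` is validated by the same finite posets as `M₁`,
then `T` contains every `n`-variable theorem of `M₂`. -/
lemma core {M₁ : Set IForm} (M₂ : Set IForm) (h₁ : SuperIntuitionistic M₁)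
    (hfin : SameFinPosets M₁ M₂) {n : ℕ} {T : Set IForm} (hT : IsPT M₁ n T)
    (S₀ : List IForm) (hS₀b : ∀ s ∈ S₀, UsesVarsLt n s)
    (hS₀ : ∀ χ, UsesVarsLt n χ → ∃ s ∈ S₀, χ.biimp s ∈ T) :
    ∀ θ ∈ M₂, UsesVarsLt n θ → θ ∈ T := by
  classical
  haveI hfinpt : Finite (Point M₁ n T) := point_finite hS₀
  haveI : Fintype (Point M₁ n T) := Fintype.ofFinite _
  set lp := (Finset.univ : Finset (Point M₁ n T)).toList with hlpdef
  have hlp : ∀ G, G ∈ lp := by intro G; simp [hlpdef, Finset.mem_toList]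
  by_cases hv : ValidLogic (Point M₁ n T) M₂
  · intro θ hθ hθb
    set v : ℕ → Set (Point M₁ n T) := fun i => {G | IForm.var i ∈ G.1} with hvdef
    have hvu : ∀ i, IsUpperSet (v i) := fun i G G' hle h => hle h
    set Troot : Point M₁ n T := ⟨T, hT, subset_rfl⟩ with hTroot
    have hF : Forces v Troot θ := hv θ hθ v hvu Troot
    have hmem : θ.subst (fun i => chiU S₀ lp (v i)) ∈ T :=
      (transfer hS₀b hS₀ lp hlp v hvu θ Troot).mp hF
    have hbi : ∀ i, i < n → (IForm.var i).biimp (chiU S₀ lp (v i)) ∈ T := by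
      intro i hi
      refine sep hi (chiU_bdd hS₀b lp (v i)) hT ?_
      intro G
      exact (chiU_mem_iff hS₀b hS₀ lp hlp (hvu i) G).symm
    have hbsubst := biimp_subst hT (fun i => chiU S₀ lp (v i))
      (fun i => chiU_bdd hS₀b lp (v i)) hbi θ hθb
    exact hT.mem_biimp_mpr hbsubst hmem
  · intro θ _ _
    exfalso
    have hv1 : ¬ ValidLogic (Point M₁ n T) M₁ := fun h => hv ((hfin (Point M₁ n T)).mp h)
    rw [ValidLogic] at hv1
    push_neg at hv1
    obtain ⟨ξ, hξM, hnval⟩ := hv1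
    rw [ValidIn] at hnval
    push_neg at hnval
    obtain ⟨w, hw, Gs, hnF⟩ := hnval
    have hξσ : ξ.subst (fun i => chiU S₀ lp (w i)) ∈ M₁ := h₁.2.2 ξ _ hξM
    have hmem : ξ.subst (fun i => chiU S₀ lp (w i)) ∈ Gs.1 :=
      Gs.2.1.closed _ (uses_subst_all (fun i => chiU_bdd hS₀b lp (w i)) ξ)
        (Prf.hyp (Or.inl hξσ))
    exact hnF ((transfer hS₀b hS₀ lp hlp w hw ξ Gs).mpr hmem)

end LTdeg
end PART3

section PART4
open IForm
namespace LTdeg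
open Prf
attribute [local instance] Classical.propDecidable

variable {L L' : Set IForm}

lemma logic_biimp_symm (hL : SuperIntuitionistic L) {a b : IForm} (h : a.biimp b ∈ L) :
    b.biimp a ∈ L := logic_of_prf hL (biimp_symm (Prf.hyp h))

lemma logic_biimp_trans (hL : SuperIntuitionistic L) {a b c : IForm} (h1 : a.biimp b ∈ L)
    (h2 : b.biimp c ∈ L) : a.biimp c ∈ L :=
  logic_of_prf hL (biimp_trans (Prf.hyp h1) (Prf.hyp h2))

/-- choose representatives inside the `n`-variable fragment -/
lemma exists_reps (hL : SuperIntuitionistic L) (hlt : LocallyTabular L) (n : ℕ) :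
    ∃ R : List IForm, (∀ r ∈ R, UsesVarsLt n r) ∧
      ∀ χ, UsesVarsLt n χ → ∃ r ∈ R, χ.biimp r ∈ L := by
  obtain ⟨S, hS⟩ := hlt n
  refine ⟨S.toList.filterMap (fun s =>
      if h : ∃ χ, UsesVarsLt n χ ∧ χ.biimp s ∈ L then some h.choose else none), ?_, ?_⟩
  · intro r hr
    obtain ⟨s, _, hrs⟩ := List.mem_filterMap.mp hr
    by_cases h : ∃ χ, UsesVarsLt n χ ∧ χ.biimp s ∈ L
    · rw [dif_pos h] at hrs
      cases hrs
      exact h.choose_spec.1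
    · rw [dif_neg h] at hrs
      cases hrs
  · intro χ hχ
    obtain ⟨ψ, hψS, hbi⟩ := hS χ hχ
    have h : ∃ χ', UsesVarsLt n χ' ∧ χ'.biimp ψ ∈ L := ⟨χ, hχ, hbi⟩
    refine ⟨h.choose, List.mem_filterMap.mpr ⟨ψ, Finset.mem_toList.mpr hψS, dif_pos h⟩, ?_⟩
    exact logic_biimp_trans hL hbi (logic_biimp_symm hL h.choose_spec.2)

/-- First inclusion: a logic sharing the finite posets of a locally tabular
logic is contained in it. -/
lemma incl1 (hL : SuperIntuitionistic L) (hL' : SuperIntuitionistic L')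
    (hlt : LocallyTabular L) (hfin : SameFinPosets L L') : L' ⊆ L := by
  intro φ hφ
  by_contra hφL
  set n := vbound φ with hn
  obtain ⟨R, hRb, hR⟩ := exists_reps hL hlt n
  have hnp : ¬ Prf (L ∪ (∅ : Set IForm)) φ := by
    intro h
    exact hφL (logic_of_prf hL (h.mono (by simp)))
  obtain ⟨T, hT, -, hφT, -⟩ := prime_ext L n ∅ (by simp) φ (uses_vbound φ) hnp
  have hS₀ : ∀ χ, UsesVarsLt n χ → ∃ s ∈ R, χ.biimp s ∈ T := by
    intro χ hχ
    obtain ⟨r, hrR, hbi⟩ := hR χ hχ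
    exact ⟨r, hrR, hT.mem_of_logic hbi (uses_biimp hχ (hRb r hrR))⟩
  exact hφT (core L' hL hfin hT R hRb hS₀ φ hφ (uses_vbound φ))

/-- Second inclusion: a locally tabular logic is contained in any si-logic
sharing its finite posets. -/
lemma incl2 (hL : SuperIntuitionistic L) (hL' : SuperIntuitionistic L')
    (hlt : LocallyTabular L) (hfin : SameFinPosets L L') : L ⊆ L' := by
  intro φ hφ
  by_contra hφL'
  set n := vbound φ with hn
  obtain ⟨R, hRb, hR⟩ := exists_reps hL hlt n
  have hrep : ∀ χ, UsesVarsLt n χ → ∃ r, r ∈ R ∧ UsesVarsLt n r ∧ χ.biimp r ∈ L := by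
    intro χ hχ
    obtain ⟨r, h1, h2⟩ := hR χ hχ
    exact ⟨r, h1, hRb r h1, h2⟩
  set ρ : IForm → IForm := fun χ =>
    if h : ∃ r, r ∈ R ∧ UsesVarsLt n r ∧ χ.biimp r ∈ L then h.choose else IForm.bot with hρ
  have hρ1 : ∀ χ, UsesVarsLt n χ → ρ χ ∈ R ∧ UsesVarsLt n (ρ χ) ∧ χ.biimp (ρ χ) ∈ L := by
    intro χ hχ
    have h := hrep χ hχ
    have : ρ χ = h.choose := by rw [hρ]; exact dif_pos h
    rw [this]
    exact h.choose_spec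
  -- the coherence formula
  set fand : IForm × IForm → IForm := fun p => (p.1.and p.2).biimp (ρ (p.1.and p.2)) with hfand
  set for_ : IForm × IForm → IForm := fun p => (p.1.or p.2).biimp (ρ (p.1.or p.2)) with hfor
  set fimp : IForm × IForm → IForm := fun p => (p.1.imp p.2).biimp (ρ (p.1.imp p.2)) with hfimp
  set E : List IForm :=
    (R.product R).map fand ++ (R.product R).map for_ ++ (R.product R).map fimp ++
      (List.range n).map (fun i => (IForm.var i).biimp (ρ (IForm.var i))) ++
      [IForm.bot.biimp (ρ IForm.bot)] with hE
  have hEL : ∀ x ∈ E, x ∈ L ∧ UsesVarsLt n x := by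
    have hpair : ∀ (f : IForm → IForm → IForm),
        (∀ a b : IForm, UsesVarsLt n a → UsesVarsLt n b → UsesVarsLt n (f a b)) →
        ∀ p : IForm × IForm, p ∈ R.product R →
          ((f p.1 p.2).biimp (ρ (f p.1 p.2)) ∈ L ∧
            UsesVarsLt n ((f p.1 p.2).biimp (ρ (f p.1 p.2)))) := by
      intro f hf p hp
      have h1 : p.1 ∈ R ∧ p.2 ∈ R := by
        have := List.pair_mem_product.mp (show (p.1, p.2) ∈ R.product R from by simpa using hp)
        exact this
      have hb : UsesVarsLt n (f p.1 p.2) := hf _ _ (hRb _ h1.1) (hRb _ h1.2)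
      obtain ⟨-, hb2, hbi⟩ := hρ1 _ hb
      exact ⟨hbi, uses_biimp hb hb2⟩
    intro x hx
    rw [hE] at hx
    simp only [List.mem_append] at hx
    rcases hx with (((hx | hx) | hx) | hx) | hx
    · obtain ⟨p, hp, rfl⟩ := List.mem_map.mp hx
      exact hpair IForm.and (fun a b ha hb => ⟨ha, hb⟩) p hp
    · obtain ⟨p, hp, rfl⟩ := List.mem_map.mp hx
      exact hpair IForm.or (fun a b ha hb => ⟨ha, hb⟩) p hp
    · obtain ⟨p, hp, rfl⟩ := List.mem_map.mp hx
      exact hpair IForm.imp (fun a b ha hb => ⟨ha, hb⟩) p hp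
    · obtain ⟨i, hi, rfl⟩ := List.mem_map.mp hx
      have hib : UsesVarsLt n (IForm.var i) := List.mem_range.mp hi
      obtain ⟨-, hb2, hbi⟩ := hρ1 _ hib
      exact ⟨hbi, uses_biimp hib hb2⟩
    · have : x = IForm.bot.biimp (ρ IForm.bot) := by simpa using hx
      subst this
      obtain ⟨-, hb2, hbi⟩ := hρ1 IForm.bot (show UsesVarsLt n IForm.bot from trivial)
      exact ⟨hbi, uses_biimp trivial hb2⟩
  set ψE : IForm := lconj E with hψE
  have hψEL : ψE ∈ L := logic_of_prf hL (lconj_intro fun x hx => Prf.hyp (hEL x hx).1)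
  have hψEb : UsesVarsLt n ψE := uses_lconj fun x hx => (hEL x hx).2
  -- coherent prime L'-theories have finite Lindenbaum quotients
  have hcoh : ∀ T' : Set IForm, IsPT L' n T' → ψE ∈ T' →
      ∀ χ, UsesVarsLt n χ → ∃ s ∈ R, χ.biimp s ∈ T' := by
    intro T' hT' hψT'
    have hconj : ∀ x ∈ E, x ∈ T' :=
      (hT'.mem_lconj_iff (fun x hx => (hEL x hx).2)).mp hψT'
    have hop : ∀ (f : IForm → IForm → IForm), (∀ p : IForm × IForm,
          p ∈ R.product R → (f p.1 p.2).biimp (ρ (f p.1 p.2)) ∈ E) →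
        ∀ r₁ r₂, r₁ ∈ R → r₂ ∈ R → (f r₁ r₂).biimp (ρ (f r₁ r₂)) ∈ T' := by
      intro f hfE r₁ r₂ h1 h2
      exact hconj _ (hfE (r₁, r₂) (List.pair_mem_product.mpr ⟨h1, h2⟩))
    intro χ
    induction χ with
    | var i =>
      intro hχ
      refine ⟨ρ (IForm.var i), (hρ1 _ hχ).1, ?_⟩
      refine hconj _ ?_
      rw [hE]
      simp only [List.mem_append]
      refine Or.inl (Or.inr ?_)
      exact List.mem_map.mpr ⟨i, List.mem_range.mpr hχ, rfl⟩
    | bot =>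
      intro hχ
      refine ⟨ρ IForm.bot, (hρ1 IForm.bot (show UsesVarsLt n IForm.bot from trivial)).1, ?_⟩
      refine hconj _ ?_
      rw [hE]
      simp only [List.mem_append]
      exact Or.inr (by simp)
    | and a b iha ihb =>
      intro hχ
      obtain ⟨r₁, hr₁R, h1⟩ := iha hχ.1
      obtain ⟨r₂, hr₂R, h2⟩ := ihb hχ.2
      have hb12 : UsesVarsLt n (r₁.and r₂) := ⟨hRb _ hr₁R, hRb _ hr₂R⟩
      have hcong : (a.and b).biimp (r₁.and r₂) ∈ T' :=
        hT'.closed _ (uses_biimp hχ hb12)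
          (cong_and (hT'.prf_of_mem h1) (hT'.prf_of_mem h2))
      have hconj2 : (r₁.and r₂).biimp (ρ (r₁.and r₂)) ∈ T' := by
        refine hop IForm.and ?_ r₁ r₂ hr₁R hr₂R
        intro p hp
        rw [hE]
        simp only [List.mem_append]
        exact Or.inl (Or.inl (Or.inl (Or.inl (List.mem_map.mpr ⟨p, hp, rfl⟩))))
      exact ⟨ρ (r₁.and r₂), (hρ1 _ hb12).1, hT'.mem_biimp_trans hcong hconj2⟩
    | or a b iha ihb =>
      intro hχ
      obtain ⟨r₁, hr₁R, h1⟩ := iha hχ.1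
      obtain ⟨r₂, hr₂R, h2⟩ := ihb hχ.2
      have hb12 : UsesVarsLt n (r₁.or r₂) := ⟨hRb _ hr₁R, hRb _ hr₂R⟩
      have hcong : (a.or b).biimp (r₁.or r₂) ∈ T' :=
        hT'.closed _ (uses_biimp hχ hb12)
          (cong_or (hT'.prf_of_mem h1) (hT'.prf_of_mem h2))
      have hconj2 : (r₁.or r₂).biimp (ρ (r₁.or r₂)) ∈ T' := by
        refine hop IForm.or ?_ r₁ r₂ hr₁R hr₂R
        intro p hp
        rw [hE]
        simp only [List.mem_append]
        exact Or.inl (Or.inl (Or.inl (Or.inr (List.mem_map.mpr ⟨p, hp, rfl⟩))))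
      exact ⟨ρ (r₁.or r₂), (hρ1 _ hb12).1, hT'.mem_biimp_trans hcong hconj2⟩
    | imp a b iha ihb =>
      intro hχ
      obtain ⟨r₁, hr₁R, h1⟩ := iha hχ.1
      obtain ⟨r₂, hr₂R, h2⟩ := ihb hχ.2
      have hb12 : UsesVarsLt n (r₁.imp r₂) := ⟨hRb _ hr₁R, hRb _ hr₂R⟩
      have hcong : (a.imp b).biimp (r₁.imp r₂) ∈ T' :=
        hT'.closed _ (uses_biimp hχ hb12)
          (cong_imp (hT'.prf_of_mem h1) (hT'.prf_of_mem h2))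
      have hconj2 : (r₁.imp r₂).biimp (ρ (r₁.imp r₂)) ∈ T' := by
        refine hop IForm.imp ?_ r₁ r₂ hr₁R hr₂R
        intro p hp
        rw [hE]
        simp only [List.mem_append]
        exact Or.inl (Or.inl (Or.inr (List.mem_map.mpr ⟨p, hp, rfl⟩)))
      exact ⟨ρ (r₁.imp r₂), (hρ1 _ hb12).1, hT'.mem_biimp_trans hcong hconj2⟩
  -- symmetric fin-poset hypothesis
  have hfin' : SameFinPosets L' L := fun X _ _ => (hfin X).symm
  -- prime L'-theory omitting φ
  have hnp0 : ¬ Prf (L' ∪ (∅ : Set IForm)) φ := by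
    intro h
    exact hφL' (logic_of_prf hL' (h.mono (by simp)))
  obtain ⟨T₀, hT₀, -, hφT₀, -⟩ := prime_ext L' n ∅ (by simp) φ (uses_vbound φ) hnp0
  by_cases hψT₀ : ψE ∈ T₀
  · exact hφT₀ (core L hL' hfin' hT₀ R hRb (hcoh T₀ hT₀ hψT₀) φ hφ (uses_vbound φ))
  · have hnp : ¬ Prf (L' ∪ T₀) ψE := fun h => hψT₀ (hT₀.closed _ hψEb h)
    obtain ⟨Tx, hTx, hT₀Tx, hψTx, hmax⟩ := prime_ext L' n T₀ hT₀.bdd ψE hψEb hnp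
    have hgood : ∀ T' : Set IForm, IsPT L' n T' → Tx ⊆ T' → Tx ≠ T' →
        ∀ θ ∈ L, UsesVarsLt n θ → θ ∈ T' := by
      intro T' hT' hsub hne
      have hψT' : ψE ∈ T' := hmax T' hT' hsub hne
      exact core L hL' hfin' hT' R hRb (hcoh T' hT' hψT')
    have hkey : ∀ χ χ' : IForm, UsesVarsLt n χ → UsesVarsLt n χ' → ρ χ = ρ χ' →
        (χ ∈ Tx ↔ χ' ∈ Tx) → χ.biimp χ' ∈ Tx := by
      have key1 : ∀ a b : IForm, UsesVarsLt n a → UsesVarsLt n b → ρ a = ρ b →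
          (a ∈ Tx ↔ b ∈ Tx) → a.imp b ∈ Tx := by
        intro a b ha hb hab hbit
        by_contra hni
        have hnp2 : ¬ Prf (L' ∪ insert a Tx) b := by
          intro hp
          exact hni (hTx.closed _ ⟨ha, hb⟩ (Prf.ded (hp.mono (by rw [Set.union_insert]))))
        obtain ⟨T', hT', hsub', hbT', -⟩ := prime_ext L' n (insert a Tx)
          (by
            intro x hx
            rcases hx with rfl | hx
            · exact ha
            · exact hTx.bdd x hx) b hb hnp2
        by_cases he : Tx = T'
        · have haTx : a ∈ Tx := he ▸ hsub' (Set.mem_insert _ _)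
          exact hbT' (he ▸ hbit.mp haTx)
        · have hTxT' : Tx ⊆ T' := (Set.subset_insert _ _).trans hsub'
          have hgood' := hgood T' hT' hTxT' he
          have haT' : a ∈ T' := hsub' (Set.mem_insert _ _)
          have h1 : a.biimp (ρ a) ∈ T' :=
            hgood' _ (hρ1 a ha).2.2 (uses_biimp ha (hρ1 a ha).2.1)
          have h2 : b.biimp (ρ b) ∈ T' :=
            hgood' _ (hρ1 b hb).2.2 (uses_biimp hb (hρ1 b hb).2.1)
          have hρa : ρ a ∈ T' := hT'.mem_biimp_mp h1 haT'
          exact hbT' (hT'.mem_biimp_mpr h2 (hab ▸ hρa))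
      intro χ χ' hχ hχ' hρeq hbit
      exact hTx.closed _ (uses_biimp hχ hχ')
        (andI' (hTx.prf_of_mem (key1 _ _ hχ hχ' hρeq hbit))
          (hTx.prf_of_mem (key1 _ _ hχ' hχ hρeq.symm hbit.symm)))
    -- representatives for Tx indexed by (ρ-value, membership bit)
    set u : IForm × Bool → IForm := fun q =>
      if h : ∃ χ, UsesVarsLt n χ ∧ ρ χ = q.1 ∧ (χ ∈ Tx ↔ q.2 = true) then h.choose
      else IForm.bot with hu
    set S₀ : List IForm := (R.product [true, false]).map u with hS₀def
    have hS₀b : ∀ s ∈ S₀, UsesVarsLt n s := by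
      intro s hs
      obtain ⟨q, hq, rfl⟩ := List.mem_map.mp hs
      by_cases h : ∃ χ, UsesVarsLt n χ ∧ ρ χ = q.1 ∧ (χ ∈ Tx ↔ q.2 = true)
      · have : u q = h.choose := by rw [hu]; exact dif_pos h
        rw [this]
        exact h.choose_spec.1
      · have : u q = IForm.bot := by rw [hu]; exact dif_neg h
        rw [this]
        trivial
    have hS₀cov : ∀ χ, UsesVarsLt n χ → ∃ s ∈ S₀, χ.biimp s ∈ Tx := by
      intro χ hχ
      set bb : Bool := if χ ∈ Tx then true else false with hbb
      have hbbiff : χ ∈ Tx ↔ bb = true := by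
        by_cases h : χ ∈ Tx <;> simp [hbb, h]
      have hx : ∃ χ', UsesVarsLt n χ' ∧ ρ χ' = ρ χ ∧ (χ' ∈ Tx ↔ bb = true) :=
        ⟨χ, hχ, rfl, hbbiff⟩
      have huq : u (ρ χ, bb) = hx.choose := by rw [hu]; exact dif_pos hx
      refine ⟨u (ρ χ, bb), ?_, ?_⟩
      · refine List.mem_map.mpr ⟨(ρ χ, bb), ?_, rfl⟩
        refine List.pair_mem_product.mpr ⟨(hρ1 χ hχ).1, ?_⟩
        by_cases h : χ ∈ Tx <;> simp [hbb, h]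
      · rw [huq]
        obtain ⟨hc1, hc2, hc3⟩ := hx.choose_spec
        exact hkey χ hx.choose hχ hc1 hc2.symm (hbbiff.trans hc3.symm)
    exact hψTx (core L hL' hfin' hTx S₀ hS₀b hS₀cov ψE hψEL hψEb)

end LTdeg
end PART4


/-- **Theorem.** Every locally tabular si-logic has degree of fmp `1`. -/
theorem locallyTabular_degFmp_one (L : Set IForm) (hL : SuperIntuitionistic L)
    (hlt : LocallyTabular L) : degFmp L = 1 := by
  have hspan : fmpSpan L = {L} := by
    apply Set.eq_singleton_iff_unique_mem.mpr
    constructor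
    · exact ⟨hL, fun X _ _ => Iff.rfl⟩
    · rintro L' ⟨hL', hfin⟩
      exact subset_antisymm (LTdeg.incl1 hL hL' hlt hfin) (LTdeg.incl2 hL hL' hlt hfin)
  rw [degFmp, hspan]
  exact Cardinal.mk_singleton L
end
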